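/- arXiv:1611.01618 — 8 statements merged into one kernel-verified Lean document; each statement's English description precedes it below -/
import Mathlib

section
/- Assume in addition r ≥ 1 and z ≥ 1, and let N'_i = A'·u₁^i + B'·u₂^i with A' = (√v − (d−1))/(2√v) and B' = (√v + (d−1))/(2√v). Then for every integer k ≥ 2, one has 2·∑_{i=0}^{k−1} N'_i = 2·(A·(u₁^{k+1} − u₁)/(u₁² − 1) + B·(u₂^{k+1} − u₂)/(u₂² − 1)); that is, hanging a mixed bipartite Moore graph from an edge yields the same Moore bound. -/
theorem stmt_4 (r z d v u₁ u₂ A B A' B' : ℝ)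
    (hr : r ≥ 1) (hz : z ≥ 1)
    (hd : d = r + z) (hv : v = (d - 1)^2 + 4*z) (hvpos : v > 0)
    (hu1 : u₁ = (d - 1 - Real.sqrt v) / 2) (hu2 : u₂ = (d - 1 + Real.sqrt v) / 2)
    (hA : A = (Real.sqrt v - (d + 1)) / (2 * Real.sqrt v))
    (hB : B = (Real.sqrt v + (d + 1)) / (2 * Real.sqrt v))
    (hA' : A' = (Real.sqrt v - (d - 1)) / (2 * Real.sqrt v))
    (hB' : B' = (Real.sqrt v + (d - 1)) / (2 * Real.sqrt v))
    (N' : ℕ → ℝ) (hN' : ∀ i : ℕ, N' i = A' * u₁ ^ i + B' * u₂ ^ i) :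
    ∀ k : ℕ, 2 ≤ k →
      2 * ∑ i ∈ Finset.range k, N' i =
        2 * (A * (u₁ ^ (k + 1) - u₁) / (u₁^2 - 1) + B * (u₂ ^ (k + 1) - u₂) / (u₂^2 - 1)) := by
  intro k hk
  set s := Real.sqrt v with hsdef
  have hspos : 0 < s := Real.sqrt_pos.mpr hvpos
  have hsne : s ≠ 0 := ne_of_gt hspos
  have hs2 : s ^ 2 = v := Real.sq_sqrt hvpos.le
  -- products at x = 1 and x = -1
  have hp1 : (u₁ - 1) * (u₂ - 1) = 2 - d - z := by
    rw [hu1, hu2]; nlinarith [hs2, hv]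
  have hp2 : (u₁ + 1) * (u₂ + 1) = r := by
    rw [hu1, hu2]; nlinarith [hs2, hv, hd]
  have hp1neg : (u₁ - 1) * (u₂ - 1) < 0 := by rw [hp1]; nlinarith [hd]
  have hp2pos : (u₁ + 1) * (u₂ + 1) > 0 := by rw [hp2]; linarith
  have h1m : u₁ - 1 ≠ 0 := by intro h; rw [h] at hp1neg; simp at hp1neg
  have h2m : u₂ - 1 ≠ 0 := by intro h; rw [h] at hp1neg; simp at hp1neg
  have h1p : u₁ + 1 ≠ 0 := by intro h; rw [h] at hp2pos; simp at hp2pos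
  have h2p : u₂ + 1 ≠ 0 := by intro h; rw [h] at hp2pos; simp at hp2pos
  have h1ne : u₁ ≠ 1 := fun h => h1m (by rw [h]; ring)
  have h2ne : u₂ ≠ 1 := fun h => h2m (by rw [h]; ring)
  have h1sq : u₁ ^ 2 - 1 ≠ 0 := by
    intro h
    have : (u₁ - 1) * (u₁ + 1) = 0 := by linear_combination h
    rcases mul_eq_zero.mp this with h' | h' <;> [exact h1m h'; exact h1p h']
  have h2sq : u₂ ^ 2 - 1 ≠ 0 := by
    intro h
    have : (u₂ - 1) * (u₂ + 1) = 0 := by linear_combination h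
    rcases mul_eq_zero.mp this with h' | h' <;> [exact h2m h'; exact h2p h']
  -- key identities
  have key1 : A * u₁ = A' * (u₁ + 1) := by
    rw [hA, hA', hu1]; field_simp; ring
  have key2 : B * u₂ = B' * (u₂ + 1) := by
    rw [hB, hB', hu2]; field_simp; ring
  have hsum : ∑ i ∈ Finset.range k, N' i
      = A' * ((u₁ ^ k - 1) / (u₁ - 1)) + B' * ((u₂ ^ k - 1) / (u₂ - 1)) := by
    simp_rw [hN']
    rw [Finset.sum_add_distrib, ← Finset.mul_sum, ← Finset.mul_sum,
      geom_sum_eq h1ne, geom_sum_eq h2ne]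
  rw [hsum]
  have t1 : A * (u₁ ^ (k + 1) - u₁) / (u₁ ^ 2 - 1) = A' * ((u₁ ^ k - 1) / (u₁ - 1)) := by
    rw [pow_succ]
    field_simp
    linear_combination ((u₁ ^ k - 1) * (u₁ - 1)) * key1
  have t2 : B * (u₂ ^ (k + 1) - u₂) / (u₂ ^ 2 - 1) = B' * ((u₂ ^ k - 1) / (u₂ - 1)) := by
    rw [pow_succ]
    field_simp
    linear_combination ((u₂ ^ k - 1) * (u₂ - 1)) * key2
  rw [t1, t2]
end

section
/- Let r, z ≥ 1 and k ≥ 2 be integers, and let G be a bipartite mixed graph on a finite vertex set V that is totally regular with degrees (r, z) and has diameter at most k. Then (card V : ℝ) ≤ M_B(r, z, k) = 2·(A·(u₁^{k+1} − u₁)/(u₁² − 1) + B·(u₂^{k+1} − u₂)/(u₂² − 1)). -/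
/-- A mixed graph is given by an adjacency matrix with entries in `{0,1}`
and zero diagonal. -/
def IsMixedGraph {V : Type*} (Adj : Matrix V V ℕ) : Prop :=
  (∀ u v : V, Adj u v ≤ 1) ∧ (∀ u : V, Adj u u = 0)

/-- Totally regular with degrees `(r, z)`: every vertex has `r` neighbors by an edge,
out-degree `z` and in-degree `z` by arcs. -/
def IsTotallyRegular {V : Type*} [Fintype V] (Adj : Matrix V V ℕ) (r z : ℕ) : Prop :=
  ∀ u : V,
    (Finset.univ.filter fun v => Adj u v = 1 ∧ Adj v u = 1).card = r ∧
    (Finset.univ.filter fun v => Adj u v = 1 ∧ Adj v u = 0).card = z ∧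
    (Finset.univ.filter fun v => Adj v u = 1 ∧ Adj u v = 0).card = z

/-- Bipartite mixed graph. -/
def IsBipartiteMixed {V : Type*} (Adj : Matrix V V ℕ) : Prop :=
  ∃ c : V → Bool, ∀ u v : V, Adj u v ≠ 0 → c u ≠ c v

/-- Diameter at most `k`: every ordered pair is joined by a walk of length at most `k`. -/
def DiamAtMost {V : Type*} [Fintype V] [DecidableEq V] (Adj : Matrix V V ℕ) (k : ℕ) : Prop :=
  ∀ u v : V, 0 < (∑ i ∈ Finset.range (k + 1), Adj ^ i) u v

/-- Diameter exactly `k`. -/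
def DiamExactly {V : Type*} [Fintype V] [DecidableEq V] (Adj : Matrix V V ℕ) (k : ℕ) : Prop :=
  DiamAtMost Adj k ∧ ∃ u v : V, (∑ i ∈ Finset.range k, Adj ^ i) u v = 0

/-- The Moore-like bound for bipartite mixed graphs with degrees `(r, z)` and diameter `k`. -/
noncomputable def mooreBoundBip (r z k : ℕ) : ℝ :=
  let d : ℝ := (r : ℝ) + (z : ℝ)
  let v : ℝ := (d - 1)^2 + 4 * (z : ℝ)
  let u₁ : ℝ := (d - 1 - Real.sqrt v) / 2
  let u₂ : ℝ := (d - 1 + Real.sqrt v) / 2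
  let A : ℝ := (Real.sqrt v - (d + 1)) / (2 * Real.sqrt v)
  let B : ℝ := (Real.sqrt v + (d + 1)) / (2 * Real.sqrt v)
  2 * (A * (u₁ ^ (k + 1) - u₁) / (u₁^2 - 1) + B * (u₂ ^ (k + 1) - u₂) / (u₂^2 - 1))

def mooreSeq (r z : ℕ) : ℕ → ℕ
  | 0 => 1
  | 1 => r + z
  | (i+2) => (r + z - 1) * mooreSeq r z (i+1) + z * mooreSeq r z i

lemma geom_even (x : ℝ) (hx : x^2 ≠ 1) (m : ℕ) :
    ∑ j ∈ Finset.range m, x^(2*j) = (x^(2*m) - 1)/(x^2-1) := by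
  have := geom_sum_eq hx m
  simpa [← pow_mul] using this

lemma mooreBound_eq_sum (r z k : ℕ) (hr : 1 ≤ r) (hz : 1 ≤ z) (hk : 2 ≤ k) :
    mooreBoundBip r z k =
      if k % 2 = 0 then 2 * ∑ j ∈ Finset.range (k/2), (mooreSeq r z (2*j+1) : ℝ)
      else 2 * ∑ j ∈ Finset.range (k/2+1), (mooreSeq r z (2*j) : ℝ) := by
  have hr1 : (1:ℝ) ≤ (r:ℝ) := by exact_mod_cast hr
  have hz1 : (1:ℝ) ≤ (z:ℝ) := by exact_mod_cast hz
  simp only [mooreBoundBip]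
  obtain ⟨s, hs⟩ : ∃ x:ℝ, Real.sqrt (((r:ℝ) + (z:ℝ) - 1)^2 + 4*(z:ℝ)) = x := ⟨_, rfl⟩
  rw [hs]
  obtain ⟨d, hd⟩ : ∃ x:ℝ, (r:ℝ) + (z:ℝ) = x := ⟨_, rfl⟩
  rw [hd]
  have hd2 : (2:ℝ) ≤ d := by rw [← hd]; linarith
  have hvpos : (0:ℝ) < (d - 1)^2 + 4*(z:ℝ) := by positivity
  have hs2 : s^2 = (d-1)^2 + 4*(z:ℝ) := by
    rw [← hs, ← hd]; rw [← hd] at hvpos; exact Real.sq_sqrt hvpos.le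
  have hspos : 0 < s := by rw [← hs, ← hd] at *; exact Real.sqrt_pos.mpr hvpos
  have hsd : d - 1 < s := by nlinarith [hs2, hspos]
  obtain ⟨u₁, hu1def⟩ : ∃ x:ℝ, (d - 1 - s)/2 = x := ⟨_, rfl⟩
  obtain ⟨u₂, hu2def⟩ : ∃ x:ℝ, (d - 1 + s)/2 = x := ⟨_, rfl⟩
  obtain ⟨A, hAdef⟩ : ∃ x:ℝ, (s - (d + 1))/(2*s) = x := ⟨_, rfl⟩
  obtain ⟨B, hBdef⟩ : ∃ x:ℝ, (s + (d + 1))/(2*s) = x := ⟨_, rfl⟩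
  rw [hu1def, hu2def, hAdef, hBdef]
  have haz : (z:ℝ) ≤ d - 1 := by rw [← hd]; linarith
  have hu2gt : 1 < u₂ := by rw [← hu2def]; linarith
  have hu2z : (z:ℝ) < u₂ := by rw [← hu2def]; linarith
  have hprod : u₁ * u₂ = -(z:ℝ) := by
    rw [← hu1def, ← hu2def]; linear_combination (-1/4)*hs2
  have hsqz : u₁^2 * u₂^2 = (z:ℝ)^2 := by linear_combination (u₁*u₂ - (z:ℝ))*hprod
  have hu1sq : u₁^2 < 1 := by nlinarith [hsqz, hu2z, hz1, sq_nonneg u₁]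
  have hu1ne : u₁^2 ≠ 1 := ne_of_lt hu1sq
  have hu2ne : u₂^2 ≠ 1 := by nlinarith
  have hu1d : u₁^2 - 1 ≠ 0 := sub_ne_zero.mpr hu1ne
  have hu2d : u₂^2 - 1 ≠ 0 := sub_ne_zero.mpr hu2ne
  have hroot1 : u₁^2 = (d-1)*u₁ + z := by
    rw [← hu1def]; linear_combination hs2/4
  have hroot2 : u₂^2 = (d-1)*u₂ + z := by
    rw [← hu2def]; linear_combination hs2/4
  have hcast : ((r + z - 1 : ℕ) : ℝ) = d - 1 := by
    have h1 : 1 ≤ r + z := by omega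
    push_cast [h1]; rw [← hd]; try ring
  have hclosed : ∀ i, (mooreSeq r z i : ℝ) = A * u₁^i + B * u₂^i := by
    have key : ∀ i, (mooreSeq r z i : ℝ) = A * u₁^i + B * u₂^i ∧
        (mooreSeq r z (i+1) : ℝ) = A * u₁^(i+1) + B * u₂^(i+1) := by
      intro i
      induction i with
      | zero =>
        constructor
        · show ((1:ℕ):ℝ) = A * u₁^0 + B * u₂^0
          rw [← hAdef, ← hBdef]; push_cast; field_simp; ring
        · show ((r + z:ℕ):ℝ) = A * u₁^1 + B * u₂^1
          rw [← hAdef, ← hBdef, ← hu1def, ← hu2def]; push_cast; rw [hd]; field_simp; ring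
      | succ i ih =>
        refine ⟨ih.2, ?_⟩
        show ((mooreSeq r z (i+2) : ℕ):ℝ) = _
        rw [show mooreSeq r z (i+2) = (r + z - 1) * mooreSeq r z (i+1) + z * mooreSeq r z i from rfl]
        push_cast [hcast]
        rw [ih.1, ih.2]
        linear_combination (-(A*u₁^i))*hroot1 + (-(B*u₂^i))*hroot2
    exact fun i => (key i).1
  rcases Nat.even_or_odd k with hke | hko
  · obtain ⟨m, hm⟩ := hke
    have hm2 : k = 2*m := by omega
    have hmod : k % 2 = 0 := by omega
    have hdiv : k / 2 = m := by omega
    rw [if_pos hmod, hdiv]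
    have hsum : ∑ j ∈ Finset.range m, (mooreSeq r z (2*j+1) : ℝ)
        = A * u₁ * ((u₁^(2*m) - 1)/(u₁^2-1)) + B * u₂ * ((u₂^(2*m) - 1)/(u₂^2-1)) := by
      rw [← geom_even u₁ hu1ne m, ← geom_even u₂ hu2ne m]
      rw [Finset.mul_sum, Finset.mul_sum, ← Finset.sum_add_distrib]
      refine Finset.sum_congr rfl fun j _ => ?_
      rw [hclosed]; try ring
    rw [hsum, hm2]
    field_simp
    ring
  · obtain ⟨m, hm⟩ := hko
    have hmod : ¬ (k % 2 = 0) := by omega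
    have hdiv : k / 2 + 1 = m + 1 := by omega
    rw [if_neg hmod, hdiv]
    have hsum : ∑ j ∈ Finset.range (m+1), (mooreSeq r z (2*j) : ℝ)
        = A * ((u₁^(2*(m+1)) - 1)/(u₁^2-1)) + B * ((u₂^(2*(m+1)) - 1)/(u₂^2-1)) := by
      rw [← geom_even u₁ hu1ne (m+1), ← geom_even u₂ hu2ne (m+1)]
      rw [Finset.mul_sum, Finset.mul_sum, ← Finset.sum_add_distrib]
      refine Finset.sum_congr rfl fun j _ => ?_
      rw [hclosed]; try ring
    rw [hsum, hm]
    have hAB0 : A * (u₂+1) + B * (u₁+1) = 0 := by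
      rw [← hAdef, ← hBdef, ← hu1def, ← hu2def]; field_simp; ring
    have hexp : 2*m+1+1 = 2*(m+1) := by ring
    rw [hexp]
    field_simp
    linear_combination ((u₂-1)*(1-u₁))*hAB0

theorem card_le_sum {V : Type*} [Fintype V] [DecidableEq V] [Nonempty V]
    (r z k : ℕ) (hr : 1 ≤ r) (hz : 1 ≤ z) (hk : 2 ≤ k)
    (Adj : Matrix V V ℕ)
    (hmixed : IsMixedGraph Adj)
    (hreg : IsTotallyRegular Adj r z)
    (hbip : IsBipartiteMixed Adj)
    (hdiam : DiamAtMost Adj k) :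
    Fintype.card V ≤
      if k % 2 = 0 then 2 * ∑ j ∈ Finset.range (k/2), mooreSeq r z (2*j+1)
      else 2 * ∑ j ∈ Finset.range (k/2+1), mooreSeq r z (2*j) := by
  classical
  obtain ⟨hA1, hA0⟩ := hmixed
  obtain ⟨c, hc⟩ := hbip
  obtain ⟨u⟩ := (inferInstance : Nonempty V)
  have hpos_exists : ∀ (f : V → ℕ), 0 < ∑ x, f x → ∃ x, 0 < f x := by
    intro f hf
    by_contra hno; push_neg at hno
    have : ∑ x, f x = 0 := Finset.sum_eq_zero fun x _ => Nat.le_zero.mp (hno x)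
    omega
  have hreach : ∀ w : V, ∃ i, 0 < (Adj ^ i) u w ∧ i ≤ k := by
    intro w
    have h := hdiam u w
    rw [Matrix.sum_apply] at h
    obtain ⟨i, hi, hposi⟩ : ∃ i ∈ Finset.range (k+1), 0 < (Adj ^ i) u w := by
      by_contra hno
      push_neg at hno
      have : ∑ i ∈ Finset.range (k+1), (Adj ^ i) u w = 0 :=
        Finset.sum_eq_zero fun i hi => Nat.le_zero.mp (hno i hi)
      omega
    exact ⟨i, hposi, Nat.lt_succ_iff.mp (Finset.mem_range.mp hi)⟩
  have hre : ∀ w : V, ∃ i, 0 < (Adj ^ i) u w := fun w => (hreach w).imp fun i h => h.1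
  set dist : V → ℕ := fun w => Nat.find (hre w) with hdistdef
  have hdist_spec : ∀ w, 0 < (Adj ^ (dist w)) u w := fun w => Nat.find_spec (hre w)
  have hdist_min : ∀ w j, 0 < (Adj ^ j) u w → dist w ≤ j := fun w j h => Nat.find_le h
  have hdist_le : ∀ w, dist w ≤ k := fun w => by
    obtain ⟨i, h1, h2⟩ := hreach w
    exact le_trans (hdist_min w i h1) h2
  have hstep : ∀ (q w : V) (j : ℕ), 0 < (Adj ^ j) u q → Adj q w = 1 → 0 < (Adj ^ (j+1)) u w := by
    intro q w j hq hqw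
    rw [pow_succ, Matrix.mul_apply]
    have h1 : 0 < (Adj ^ j) u q * Adj q w := by rw [hqw]; simpa using hq
    exact lt_of_lt_of_le h1
      (Finset.single_le_sum (f := fun x => (Adj ^ j) u x * Adj x w)
        (fun x _ => Nat.zero_le _) (Finset.mem_univ q))
  have hpred : ∀ (w : V) (i : ℕ), dist w = i + 1 → ∃ q, dist q = i ∧ Adj q w = 1 := by
    intro w i hw
    have h := hdist_spec w
    rw [hw, pow_succ, Matrix.mul_apply] at h
    obtain ⟨q, hq⟩ := hpos_exists _ h
    have hq1 : 0 < (Adj ^ i) u q := by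
      rcases Nat.eq_zero_or_pos ((Adj ^ i) u q) with h0 | h0
      · rw [h0] at hq; simp at hq
      · exact h0
    have hq2 : Adj q w = 1 := by
      have : Adj q w ≠ 0 := by
        intro h0; rw [h0] at hq; simp at hq
      have := hA1 q w
      omega
    have hle : dist q ≤ i := hdist_min q i hq1
    have hge : i ≤ dist q := by
      have h2 := hstep q w (dist q) (hdist_spec q) hq2
      have h3 := hdist_min w _ h2
      omega
    exact ⟨q, by omega, hq2⟩
  set L : ℕ → Finset V := fun i => Finset.univ.filter (fun w => dist w = i) with hLdef
  have houtd : ∀ p : V, (Finset.univ.filter fun w => Adj p w = 1).card = r + z := by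
    intro p
    obtain ⟨h1, h2, h3⟩ := hreg p
    rw [← h1, ← h2]
    rw [show (Finset.univ.filter fun w => Adj p w = 1)
        = (Finset.univ.filter fun w => Adj p w = 1 ∧ Adj w p = 1)
          ∪ (Finset.univ.filter fun w => Adj p w = 1 ∧ Adj w p = 0) from by
      ext w
      simp only [Finset.mem_filter, Finset.mem_union, Finset.mem_univ, true_and]
      have := hA1 w p
      omega]
    apply Finset.card_union_of_disjoint
    rw [Finset.disjoint_left]
    intro a ha hb
    simp only [Finset.mem_filter] at ha hb
    omega
  have hn0 : (L 0).card ≤ 1 := by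
    have hsub : L 0 ⊆ {u} := by
      intro w hw
      simp only [hLdef, Finset.mem_filter] at hw
      have h := hdist_spec w
      rw [hw.2] at h
      simp only [pow_zero, Matrix.one_apply] at h
      by_cases huw : u = w
      · simp [huw]
      · rw [if_neg huw] at h; omega
    simpa using Finset.card_le_card hsub
  have hn1 : (L 1).card ≤ r + z := by
    have hsub : L 1 ⊆ Finset.univ.filter (fun w => Adj u w = 1) := by
      intro w hw
      simp only [hLdef, Finset.mem_filter] at hw ⊢
      obtain ⟨q, hq0, hq1⟩ := hpred w 0 hw.2
      have hque : q = u := by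
        have h := hdist_spec q
        rw [hq0] at h
        simp only [pow_zero, Matrix.one_apply] at h
        by_cases huw : u = q
        · exact huw.symm
        · rw [if_neg huw] at h; omega
      refine ⟨Finset.mem_univ w, ?_⟩
      rw [← hque]
      exact hq1
    exact le_trans (Finset.card_le_card hsub) (le_of_eq (houtd u))
  -- recurrence on layer sizes
  have hrec : ∀ i : ℕ, (L (i+2)).card ≤ (r + z - 1) * (L (i+1)).card + z * (L i).card := by
    intro i
    obtain ⟨D, hD⟩ : ∃ D, r + z = D + 1 := ⟨r + z - 1, by omega⟩
    have hD1 : r + z - 1 = D := by omega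
    -- main covering
    have hA : L (i+2) ⊆ (L (i+1)).biUnion
        (fun p => Finset.univ.filter (fun w => Adj p w = 1 ∧ dist w = i+2)) := by
      intro w hw
      simp only [hLdef, Finset.mem_filter] at hw
      obtain ⟨q, hq, hq1⟩ := hpred w (i+1) hw.2
      refine Finset.mem_biUnion.mpr ⟨q, ?_, ?_⟩ <;>
        simp [hLdef, hq, hq1, hw.2]
    have hcardA : (L (i+2)).card ≤
        ∑ p ∈ L (i+1), (Finset.univ.filter (fun w => Adj p w = 1 ∧ dist w = i+2)).card :=
      le_trans (Finset.card_le_card hA) Finset.card_biUnion_le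
    -- split L (i+1) by having an edge-predecessor
    have hsplit : ∑ p ∈ L (i+1), (Finset.univ.filter (fun w => Adj p w = 1 ∧ dist w = i+2)).card
        = ∑ p ∈ (L (i+1)).filter (fun p => ∃ q, Adj q p = 1 ∧ Adj p q = 1 ∧ dist q = i),
            (Finset.univ.filter (fun w => Adj p w = 1 ∧ dist w = i+2)).card
          + ∑ p ∈ (L (i+1)).filter (fun p => ¬ ∃ q, Adj q p = 1 ∧ Adj p q = 1 ∧ dist q = i),
            (Finset.univ.filter (fun w => Adj p w = 1 ∧ dist w = i+2)).card :=
      (Finset.sum_filter_add_sum_filter_not _ _ _).symm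
    -- fiber bound for edge-predecessor vertices
    have hfibE : ∀ p ∈ (L (i+1)).filter (fun p => ∃ q, Adj q p = 1 ∧ Adj p q = 1 ∧ dist q = i),
        (Finset.univ.filter (fun w => Adj p w = 1 ∧ dist w = i+2)).card ≤ D := by
      intro p hp
      simp only [Finset.mem_filter] at hp
      obtain ⟨q, hq1, hq2, hq3⟩ := hp.2
      have hsubq : Finset.univ.filter (fun w => Adj p w = 1 ∧ dist w = i+2)
          ⊆ (Finset.univ.filter (fun w => Adj p w = 1)).erase q := by
        intro w hw
        simp only [Finset.mem_filter] at hw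
        refine Finset.mem_erase.mpr ⟨?_, by simp [hw.2.1]⟩
        intro he
        rw [he] at hw
        omega
      have := Finset.card_le_card hsubq
      rw [Finset.card_erase_of_mem (by simp [hq2]), houtd p] at this
      omega
    -- fiber bound in general
    have hfibA : ∀ p : V,
        (Finset.univ.filter (fun w => Adj p w = 1 ∧ dist w = i+2)).card ≤ D + 1 := by
      intro p
      have hsubq : Finset.univ.filter (fun w => Adj p w = 1 ∧ dist w = i+2)
          ⊆ Finset.univ.filter (fun w => Adj p w = 1) :=
        Finset.filter_subset_filter _ (by intro w hw; exact hw) |>.trans (by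
          intro w hw
          simp only [Finset.mem_filter] at hw ⊢
          exact ⟨hw.1, hw.2.1⟩)
      have := Finset.card_le_card hsubq
      rw [houtd p] at this
      omega
    -- the arc-only class is covered by out-arcs of layer i
    have hLzsub : (L (i+1)).filter (fun p => ¬ ∃ q, Adj q p = 1 ∧ Adj p q = 1 ∧ dist q = i)
        ⊆ (L i).biUnion (fun q => Finset.univ.filter (fun p => Adj q p = 1 ∧ Adj p q = 0)) := by
      intro p hp
      simp only [Finset.mem_filter, hLdef] at hp
      obtain ⟨q, hq, hq1⟩ := hpred p i hp.1.2
      refine Finset.mem_biUnion.mpr ⟨q, by simp [hLdef, hq], ?_⟩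
      simp only [Finset.mem_filter, Finset.mem_univ, true_and]
      refine ⟨hq1, ?_⟩
      have hnot := hp.2
      push_neg at hnot
      have h3 := hnot q hq1
      have := hA1 p q
      by_cases hpq : Adj p q = 1
      · exact absurd hq (h3 hpq)
      · omega
    have hLz : ((L (i+1)).filter (fun p => ¬ ∃ q, Adj q p = 1 ∧ Adj p q = 1 ∧ dist q = i)).card
        ≤ z * (L i).card := by
      refine le_trans (Finset.card_le_card hLzsub) (le_trans Finset.card_biUnion_le ?_)
      rw [Finset.sum_congr rfl (fun q _ => (hreg q).2.1)]
      simp [mul_comm]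
    -- put it together
    set a := ((L (i+1)).filter (fun p => ∃ q, Adj q p = 1 ∧ Adj p q = 1 ∧ dist q = i)).card with ha
    set b := ((L (i+1)).filter (fun p => ¬ ∃ q, Adj q p = 1 ∧ Adj p q = 1 ∧ dist q = i)).card with hb
    have hab : a + b = (L (i+1)).card := Finset.card_filter_add_card_filter_not _
    have hs1 : ∑ p ∈ (L (i+1)).filter (fun p => ∃ q, Adj q p = 1 ∧ Adj p q = 1 ∧ dist q = i),
        (Finset.univ.filter (fun w => Adj p w = 1 ∧ dist w = i+2)).card ≤ D * a := by
      rw [ha]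
      calc _ ≤ ∑ _p ∈ (L (i+1)).filter (fun p => ∃ q, Adj q p = 1 ∧ Adj p q = 1 ∧ dist q = i), D :=
            Finset.sum_le_sum hfibE
        _ = _ := by rw [Finset.sum_const, smul_eq_mul, mul_comm]
    have hs2 : ∑ p ∈ (L (i+1)).filter (fun p => ¬ ∃ q, Adj q p = 1 ∧ Adj p q = 1 ∧ dist q = i),
        (Finset.univ.filter (fun w => Adj p w = 1 ∧ dist w = i+2)).card ≤ (D+1) * b := by
      rw [hb]
      calc _ ≤ ∑ _p ∈ (L (i+1)).filter (fun p => ¬ ∃ q, Adj q p = 1 ∧ Adj p q = 1 ∧ dist q = i), (D+1) :=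
            Finset.sum_le_sum (fun p _ => hfibA p)
        _ = _ := by rw [Finset.sum_const, smul_eq_mul, mul_comm]
    calc (L (i+2)).card ≤ _ := hcardA
      _ = _ := hsplit
      _ ≤ D * a + (D + 1) * b := Nat.add_le_add hs1 hs2
      _ = D * (a + b) + b := by ring
      _ = D * (L (i+1)).card + b := by rw [hab]
      _ ≤ D * (L (i+1)).card + z * (L i).card := Nat.add_le_add_left hLz _
      _ = (r + z - 1) * (L (i+1)).card + z * (L i).card := by rw [hD1]
  -- layer sizes are at most the Moore tree sizes
  have hnN : ∀ i : ℕ, (L i).card ≤ mooreSeq r z i := by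
    have key : ∀ i : ℕ, (L i).card ≤ mooreSeq r z i ∧ (L (i+1)).card ≤ mooreSeq r z (i+1) := by
      intro i
      induction i with
      | zero => exact ⟨hn0, hn1⟩
      | succ i ih =>
        refine ⟨ih.2, ?_⟩
        show (L (i+2)).card ≤ mooreSeq r z (i+2)
        rw [show mooreSeq r z (i+2) = (r + z - 1) * mooreSeq r z (i+1) + z * mooreSeq r z i from rfl]
        exact le_trans (hrec i)
          (Nat.add_le_add (Nat.mul_le_mul_left _ ih.2) (Nat.mul_le_mul_left _ ih.1))
    exact fun i => (key i).1
  -- parity of walks in a bipartite graph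
  have hparity : ∀ (i : ℕ) (w : V), 0 < (Adj ^ i) u w → (c u = c w ↔ i % 2 = 0) := by
    intro i
    induction i with
    | zero =>
      intro w h
      simp only [pow_zero, Matrix.one_apply] at h
      by_cases huw : u = w
      · subst huw; simp
      · rw [if_neg huw] at h; omega
    | succ i ih =>
      intro w h
      rw [pow_succ, Matrix.mul_apply] at h
      obtain ⟨q, hq⟩ := hpos_exists _ h
      have hq1 : 0 < (Adj ^ i) u q := by
        rcases Nat.eq_zero_or_pos ((Adj ^ i) u q) with h0 | h0
        · rw [h0] at hq; simp at hq
        · exact h0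
      have hq2 : Adj q w ≠ 0 := by
        intro h0; rw [h0] at hq; simp at hq
      have hcq := ih q hq1
      have hneq : c q ≠ c w := hc q w hq2
      have hmod : (i+1) % 2 = 0 ↔ ¬ (i % 2 = 0) := by omega
      rw [hmod, ← hcq]
      have hbool : ∀ x y w : Bool, y ≠ w → (x = w ↔ ¬ x = y) := by decide
      exact hbool _ _ _ hneq
  -- the two color classes have the same size
  have hbool2 : ∀ x y t : Bool, x ≠ y → ¬ x = t → y = t := by decide
  have hXYcard :
      (Finset.univ.filter (fun w => c w = c u)).card
        = (Finset.univ.filter (fun w => ¬ (c w = c u))).card := by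
    have hcount : ∀ w : V, ¬ (c w = c u) →
        (∑ p ∈ Finset.univ.filter (fun x => c x = c u), if Adj p w = 1 ∧ Adj w p = 0 then (1:ℕ) else 0)
          = (Finset.univ.filter (fun p => Adj p w = 1 ∧ Adj w p = 0)).card := by
      intro w hw
      simp only [Finset.card_filter]
      refine Finset.sum_subset (Finset.filter_subset _ _) ?_
      intro p _ hp
      simp only [Finset.mem_filter, Finset.mem_univ, true_and] at hp
      by_cases h1 : Adj p w = 1 ∧ Adj w p = 0
      · exfalso
        have hne := hc p w (by omega)
        exact hp (hbool2 _ _ _ hne.symm hw)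
      · simp [h1]
    have hzero : ∀ w : V, (c w = c u) →
        (∑ p ∈ Finset.univ.filter (fun x => c x = c u), if Adj p w = 1 ∧ Adj w p = 0 then (1:ℕ) else 0)
          = 0 := by
      intro w hw
      refine Finset.sum_eq_zero ?_
      intro p hp
      simp only [Finset.mem_filter, Finset.mem_univ, true_and] at hp
      by_cases h1 : Adj p w = 1 ∧ Adj w p = 0
      · exfalso
        have hne := hc p w (by omega)
        exact hne (hp.trans hw.symm)
      · simp [h1]
    have hleft : (Finset.univ.filter (fun w => c w = c u)).card * z
        = ∑ p ∈ Finset.univ.filter (fun x => c x = c u),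
            (Finset.univ.filter (fun w => Adj p w = 1 ∧ Adj w p = 0)).card := by
      rw [Finset.sum_congr rfl (fun p _ => (hreg p).2.1), Finset.sum_const, smul_eq_mul]
    have hswap : ∑ p ∈ Finset.univ.filter (fun x => c x = c u),
            (Finset.univ.filter (fun w => Adj p w = 1 ∧ Adj w p = 0)).card
        = ∑ w ∈ Finset.univ.filter (fun x => ¬ (c x = c u)),
            (Finset.univ.filter (fun p => Adj p w = 1 ∧ Adj w p = 0)).card := by
      calc ∑ p ∈ Finset.univ.filter (fun x => c x = c u),
              (Finset.univ.filter (fun w => Adj p w = 1 ∧ Adj w p = 0)).card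
          = ∑ p ∈ Finset.univ.filter (fun x => c x = c u),
              ∑ w : V, (if Adj p w = 1 ∧ Adj w p = 0 then (1:ℕ) else 0) := by
            refine Finset.sum_congr rfl fun p _ => ?_
            simp only [Finset.card_filter]
        _ = ∑ w : V, ∑ p ∈ Finset.univ.filter (fun x => c x = c u),
              (if Adj p w = 1 ∧ Adj w p = 0 then (1:ℕ) else 0) := Finset.sum_comm
        _ = (∑ w ∈ Finset.univ.filter (fun x => c x = c u),
              ∑ p ∈ Finset.univ.filter (fun x => c x = c u),
                (if Adj p w = 1 ∧ Adj w p = 0 then (1:ℕ) else 0))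
            + ∑ w ∈ Finset.univ.filter (fun x => ¬ (c x = c u)),
              ∑ p ∈ Finset.univ.filter (fun x => c x = c u),
                (if Adj p w = 1 ∧ Adj w p = 0 then (1:ℕ) else 0) :=
            (Finset.sum_filter_add_sum_filter_not Finset.univ (fun x => c x = c u) _).symm
        _ = 0 + ∑ w ∈ Finset.univ.filter (fun x => ¬ (c x = c u)),
              ∑ p ∈ Finset.univ.filter (fun x => c x = c u),
                (if Adj p w = 1 ∧ Adj w p = 0 then (1:ℕ) else 0) := by
            congr 1
            refine Finset.sum_eq_zero fun w hw => ?_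
            simp only [Finset.mem_filter, Finset.mem_univ, true_and] at hw
            exact hzero w hw
        _ = ∑ w ∈ Finset.univ.filter (fun x => ¬ (c x = c u)),
              (Finset.univ.filter (fun p => Adj p w = 1 ∧ Adj w p = 0)).card := by
            rw [zero_add]
            refine Finset.sum_congr rfl fun w hw => ?_
            simp only [Finset.mem_filter, Finset.mem_univ, true_and] at hw
            exact hcount w hw
    have hright : ∑ w ∈ Finset.univ.filter (fun x => ¬ (c x = c u)),
            (Finset.univ.filter (fun p => Adj p w = 1 ∧ Adj w p = 0)).card
        = (Finset.univ.filter (fun x => ¬ (c x = c u))).card * z := by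
      rw [Finset.sum_congr rfl (fun w _ => (hreg w).2.2), Finset.sum_const, smul_eq_mul]
    have := hleft.trans (hswap.trans hright)
    exact Nat.eq_of_mul_eq_mul_right (by omega) this
  have hVcard : Fintype.card V
      = (Finset.univ.filter (fun w => c w = c u)).card
        + (Finset.univ.filter (fun w => ¬ (c w = c u))).card := by
    rw [Finset.card_filter_add_card_filter_not, Finset.card_univ]
  -- final count by parity of k
  rcases Nat.even_or_odd k with hke | hko
  · obtain ⟨m, hm⟩ := hke
    have hm2 : k = 2*m := by omega
    have hmod : k % 2 = 0 := by omega
    have hdiv : k / 2 = m := by omega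
    rw [if_pos hmod, hdiv]
    have hYsub : Finset.univ.filter (fun w => ¬ (c w = c u))
        ⊆ (Finset.range m).biUnion (fun j => L (2*j+1)) := by
      intro w hw
      simp only [Finset.mem_filter, Finset.mem_univ, true_and] at hw
      have hodd : ¬ (dist w % 2 = 0) := by
        intro h0
        exact hw ((hparity (dist w) w (hdist_spec w)).mpr h0).symm
      have hle := hdist_le w
      refine Finset.mem_biUnion.mpr ⟨dist w / 2, Finset.mem_range.mpr (by omega), ?_⟩
      simp only [hLdef, Finset.mem_filter, Finset.mem_univ, true_and]
      omega
    have hYle : (Finset.univ.filter (fun w => ¬ (c w = c u))).card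
        ≤ ∑ j ∈ Finset.range m, mooreSeq r z (2*j+1) := by
      refine le_trans (Finset.card_le_card hYsub) (le_trans Finset.card_biUnion_le ?_)
      exact Finset.sum_le_sum fun j _ => hnN (2*j+1)
    rw [hVcard, hXYcard]
    omega
  · obtain ⟨m, hm⟩ := hko
    have hmod : ¬ (k % 2 = 0) := by omega
    have hdiv : k / 2 + 1 = m + 1 := by omega
    rw [if_neg hmod, hdiv]
    have hXsub : Finset.univ.filter (fun w => c w = c u)
        ⊆ (Finset.range (m+1)).biUnion (fun j => L (2*j)) := by
      intro w hw
      simp only [Finset.mem_filter, Finset.mem_univ, true_and] at hw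
      have heven : dist w % 2 = 0 :=
        (hparity (dist w) w (hdist_spec w)).mp hw.symm
      have hle := hdist_le w
      refine Finset.mem_biUnion.mpr ⟨dist w / 2, Finset.mem_range.mpr (by omega), ?_⟩
      simp only [hLdef, Finset.mem_filter, Finset.mem_univ, true_and]
      omega
    have hXle : (Finset.univ.filter (fun w => c w = c u)).card
        ≤ ∑ j ∈ Finset.range (m+1), mooreSeq r z (2*j) := by
      refine le_trans (Finset.card_le_card hXsub) (le_trans Finset.card_biUnion_le ?_)
      exact Finset.sum_le_sum fun j _ => hnN (2*j)
    rw [hVcard, ← hXYcard]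
    omega

theorem stmt_10 {V : Type*} [Fintype V] [DecidableEq V] [Nonempty V]
    (r z k : ℕ) (hr : 1 ≤ r) (hz : 1 ≤ z) (hk : 2 ≤ k)
    (Adj : Matrix V V ℕ)
    (hmixed : IsMixedGraph Adj)
    (hreg : IsTotallyRegular Adj r z)
    (hbip : IsBipartiteMixed Adj)
    (hdiam : DiamAtMost Adj k) :
    (Fintype.card V : ℝ) ≤ mooreBoundBip r z k := by
  have h1 := card_le_sum r z k hr hz hk Adj hmixed hreg hbip hdiam
  rw [mooreBound_eq_sum r z k hr hz hk]
  by_cases hmod : k % 2 = 0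
  · rw [if_pos hmod] at h1 ⊢
    exact_mod_cast h1
  · rw [if_neg hmod] at h1 ⊢
    exact_mod_cast h1
end

section
/- Let r ≥ 1, z ≥ 1 be integers with d = r + z, and let G be a bipartite mixed graph on a finite vertex set V that is totally regular with degrees (r, z), has diameter exactly 3, and has card V = 2(d² − r + 1) vertices (a mixed bipartite Moore graph of diameter 3). Then the characteristic polynomial of the real adjacency matrix of G equals (X − d)·(X + d)·(X² − (r−1))^{d² − r}; equivalently, G has spectrum {d, (√(r−1))^{d²−r}, (−√(r−1))^{d²−r}, −d}, where superscripts denote multiplicities. -/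
open Polynomial Matrix Finset in
/-- Evaluation of the characteristic polynomial. -/
lemma myEvalCharpoly {n : Type*} [Fintype n] [DecidableEq n]
    (M : Matrix n n ℝ) (x : ℝ) : M.charpoly.eval x = (x • (1 : Matrix n n ℝ) - M).det := by
  rw [Matrix.charpoly, ← Polynomial.coe_evalRingHom, RingHom.map_det]
  congr 1
  ext i j
  by_cases h : i = j
  · subst h; simp [charmatrix_apply_eq, Matrix.one_apply]
  · simp [charmatrix_apply_ne _ _ _ h, Matrix.one_apply_ne h]

open Matrix in
/-- Determinant of `y • 1 - J` where `J` is the all-ones matrix. -/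
lemma myDetJ {ι : Type*} [Fintype ι] [DecidableEq ι] (y : ℝ) (hy : y ≠ 0) :
    (y • (1 : Matrix ι ι ℝ) - Matrix.of (fun _ _ => (1:ℝ))).det
      = y ^ Fintype.card ι * (1 - (Fintype.card ι : ℝ) / y) := by
  have h1 : y • (1 : Matrix ι ι ℝ) - Matrix.of (fun _ _ => (1:ℝ))
      = y • ((1 : Matrix ι ι ℝ)
          + Matrix.replicateCol Unit (fun _ : ι => -y⁻¹) * Matrix.replicateRow Unit (fun _ : ι => (1:ℝ))) := by
    ext i j
    simp [Matrix.mul_apply, Matrix.one_apply, Matrix.smul_apply, mul_add, mul_comm]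
    by_cases h : i = j <;> simp [h, mul_inv_cancel₀ hy] <;> ring
  rw [h1, Matrix.det_smul, Matrix.det_one_add_replicateCol_mul_replicateRow]
  simp [dotProduct, div_eq_mul_inv]
  left; ring

lemma mySumOnes {ι : Type*} (s : Finset ι) (f : ι → ℕ) (h1 : ∀ i ∈ s, 1 ≤ f i)
    (h2 : ∑ i ∈ s, f i = s.card) : ∀ i ∈ s, f i = 1 := by
  intro i hi
  by_contra hne
  have hlt : 1 < f i := lt_of_le_of_ne (h1 i hi) (Ne.symm hne)
  have : s.card < ∑ i ∈ s, f i := by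
    calc s.card = ∑ _i ∈ s, 1 := by simp
    _ < ∑ i ∈ s, f i := Finset.sum_lt_sum h1 ⟨i, hi, hlt⟩
  omega

lemma myBool {a b c : Bool} (h1 : a ≠ b) (h2 : b ≠ c) : a = c := by
  cases a <;> cases b <;> cases c <;> simp_all

open Polynomial in
theorem stmt_12 {V : Type*} [Fintype V] [DecidableEq V] [Nonempty V]
    (r z d : ℕ) (hr : 1 ≤ r) (hz : 1 ≤ z) (hd : d = r + z)
    (Adj : Matrix V V ℕ)
    (hmixed : IsMixedGraph Adj)
    (hreg : IsTotallyRegular Adj r z)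
    (hbip : IsBipartiteMixed Adj)
    (hdiam : DiamExactly Adj 3)
    (hcard : Fintype.card V = 2 * (d^2 - r + 1)) :
    (Adj.map fun n => (n : ℝ)).charpoly =
      (X - C (d : ℝ)) * (X + C (d : ℝ)) * (X^2 - C ((r : ℝ) - 1)) ^ (d^2 - r) := by
  classical
  open Matrix Finset in
  obtain ⟨h01', hdiag0⟩ := hmixed
  obtain ⟨c, hc⟩ := hbip
  have h01 : ∀ u v, Adj u v = 0 ∨ Adj u v = 1 := fun u v => by have := h01' u v; omega
  set k := d ^ 2 - r with hkdef
  have hdpos : 0 < d := by omega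
  have hrd2 : r ≤ d ^ 2 := by nlinarith
  have hk : d ^ 2 = r + k := by omega
  have hm : Fintype.card V = 2 * (k + 1) := hcard
  -- row sums
  have hrow : ∀ u, ∑ v, Adj u v = d := by
    intro u
    obtain ⟨h1, h2, _⟩ := hreg u
    have hsum : ∑ v, Adj u v = (univ.filter fun v => Adj u v = 1).card := by
      rw [Finset.card_filter]
      refine Finset.sum_congr rfl fun v _ => ?_
      rcases h01 u v with h | h <;> simp [h]
    have hsplit : (univ.filter fun v => Adj u v = 1)
        = (univ.filter fun v => Adj u v = 1 ∧ Adj v u = 1)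
          ∪ (univ.filter fun v => Adj u v = 1 ∧ Adj v u = 0) := by
      ext v
      simp only [mem_filter, mem_union, mem_univ, true_and]
      rcases h01 v u with h | h <;> simp [h]
    have hdisj : Disjoint (univ.filter fun v => Adj u v = 1 ∧ Adj v u = 1)
        (univ.filter fun v => Adj u v = 1 ∧ Adj v u = 0) := by
      rw [Finset.disjoint_left]
      intro a ha hb
      simp only [mem_filter] at ha hb
      omega
    rw [hsum, hsplit, Finset.card_union_of_disjoint hdisj, h1, h2, hd]
  -- column sums
  have hcol : ∀ u, ∑ v, Adj v u = d := by
    intro u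
    obtain ⟨h1, _, h3⟩ := hreg u
    have hsum : ∑ v, Adj v u = (univ.filter fun v => Adj v u = 1).card := by
      rw [Finset.card_filter]
      refine Finset.sum_congr rfl fun v _ => ?_
      rcases h01 v u with h | h <;> simp [h]
    have h1' : (univ.filter fun v => Adj v u = 1 ∧ Adj u v = 1).card = r := by
      rw [← h1]; congr 1; ext v; simp only [mem_filter]; tauto
    have hsplit : (univ.filter fun v => Adj v u = 1)
        = (univ.filter fun v => Adj v u = 1 ∧ Adj u v = 1)
          ∪ (univ.filter fun v => Adj v u = 1 ∧ Adj u v = 0) := by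
      ext v
      simp only [mem_filter, mem_union, mem_univ, true_and]
      rcases h01 u v with h | h <;> simp [h]
    have hdisj : Disjoint (univ.filter fun v => Adj v u = 1 ∧ Adj u v = 1)
        (univ.filter fun v => Adj v u = 1 ∧ Adj u v = 0) := by
      rw [Finset.disjoint_left]
      intro a ha hb
      simp only [mem_filter] at ha hb
      omega
    rw [hsum, hsplit, Finset.card_union_of_disjoint hdisj, h1', h3, hd]
  -- the two sides of the bipartition have equal cardinality k + 1
  set T := univ.filter fun v => c v = true with hTdef
  set F := univ.filter fun v => ¬ (c v = true) with hFdef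
  have hTFcard : T.card = F.card := by
    have e1 : ∀ u ∈ T, ∑ v, Adj u v = ∑ v ∈ F, Adj u v := by
      intro u hu
      rw [hTdef, mem_filter] at hu
      refine (Finset.sum_subset (Finset.subset_univ F) ?_).symm
      intro v _ hv
      have hvt : c v = true := by
        by_contra h; exact hv (mem_filter.mpr ⟨mem_univ v, h⟩)
      by_contra hne
      exact (hc u v hne) (hu.2.trans hvt.symm)
    have e2 : ∀ v ∈ F, ∑ u, Adj u v = ∑ u ∈ T, Adj u v := by
      intro v hv
      rw [hFdef, mem_filter] at hv
      refine (Finset.sum_subset (Finset.subset_univ T) ?_).symm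
      intro u _ hu
      have hut : ¬ (c u = true) := by
        intro h; exact hu (mem_filter.mpr ⟨mem_univ u, h⟩)
      by_contra hne
      have hf1 : c u = false := by simpa using hut
      have hf2 : c v = false := by simpa using hv.2
      exact (hc u v hne) (hf1.trans hf2.symm)
    have l1 : ∑ u ∈ T, ∑ v ∈ F, Adj u v = T.card * d := by
      rw [← Finset.sum_congr rfl e1, Finset.sum_congr rfl (fun u _ => hrow u),
        Finset.sum_const, smul_eq_mul]
    have l2 : ∑ v ∈ F, ∑ u ∈ T, Adj u v = F.card * d := by
      rw [← Finset.sum_congr rfl e2, Finset.sum_congr rfl (fun v _ => hcol v),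
        Finset.sum_const, smul_eq_mul]
    have key : T.card * d = F.card * d := by rw [← l1, ← l2, Finset.sum_comm]
    exact Nat.eq_of_mul_eq_mul_right hdpos key
  have hTF2 : T.card + F.card = 2 * (k + 1) := by
    rw [hTdef, hFdef, Finset.card_filter_add_card_filter_not, Finset.card_univ, hm]
  have hT : T.card = k + 1 := by omega
  have hF : F.card = k + 1 := by omega
  have hside : ∀ u, (univ.filter fun w => c w = c u).card = k + 1 := by
    intro u
    cases hcu : c u
    · rw [← hF, hFdef]; congr 1; ext w; simp [hcu]
    · rw [← hT, hTdef]
  -- structure of Adj * Adj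
  have hA2diag : ∀ u, (Adj * Adj) u u = r := by
    intro u
    rw [Matrix.mul_apply, ← (hreg u).1, Finset.card_filter]
    refine Finset.sum_congr rfl fun v _ => ?_
    rcases h01 u v with h | h <;> rcases h01 v u with h' | h' <;> simp [h, h']
  have hA2cross : ∀ u w, c u ≠ c w → (Adj * Adj) u w = 0 := by
    intro u w hne
    rw [Matrix.mul_apply]
    refine Finset.sum_eq_zero fun v _ => ?_
    rcases h01 u v with h | h
    · simp [h]
    rcases h01 v w with h' | h'
    · simp [h']
    exact absurd (myBool (hc u v (by omega)) (hc v w (by omega))) hne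
  have hA3zero : ∀ u w, c u = c w → (Adj * Adj * Adj) u w = 0 := by
    intro u w he
    rw [Matrix.mul_apply]
    refine Finset.sum_eq_zero fun b _ => ?_
    by_cases hb : c u = c b
    · rcases h01 b w with h | h
      · simp [h]
      · exact absurd (hb.symm.trans he) (hc b w (by omega))
    · rw [hA2cross u b hb, zero_mul]
  have hA2rowsum : ∀ u, ∑ w, (Adj * Adj) u w = d * d := by
    intro u
    simp_rw [Matrix.mul_apply]
    rw [Finset.sum_comm]
    calc ∑ v, ∑ w, Adj u v * Adj v w = ∑ v, Adj u v * d := by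
          refine Finset.sum_congr rfl fun v _ => ?_
          rw [← Finset.mul_sum, hrow v]
      _ = d * d := by rw [← Finset.sum_mul, hrow u]
  have hA2ge : ∀ u w, u ≠ w → c u = c w → 1 ≤ (Adj * Adj) u w := by
    intro u w hne he
    have hpos := hdiam.1 u w
    rw [Matrix.sum_apply] at hpos
    have h0 : (Adj ^ 0) u w = 0 := by
      simp [Matrix.one_apply_ne hne]
    have h1 : (Adj ^ 1) u w = 0 := by
      rw [pow_one]
      by_contra h
      exact (hc u w h) he
    have h3 : (Adj ^ 3) u w = 0 := by
      have h33 : Adj ^ 3 = Adj * Adj * Adj := by rw [pow_succ, sq]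
      rw [h33]
      exact hA3zero u w he
    have h2 : Adj ^ 2 = Adj * Adj := sq Adj
    rw [Finset.sum_range_succ, Finset.sum_range_succ, Finset.sum_range_succ,
      Finset.sum_range_succ, Finset.sum_range_zero, h0, h1, h3, h2] at hpos
    omega
  have hA2one : ∀ u w, u ≠ w → c u = c w → (Adj * Adj) u w = 1 := by
    intro u w hne he
    set s : Finset V := (univ.filter fun w => c w = c u).erase u with hs
    have hucard : s.card = k := by
      rw [hs, Finset.card_erase_of_mem (by simp), hside u]
      omega
    have hsum : ∑ w ∈ s, (Adj * Adj) u w = k := by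
      have split1 : ∑ w, (Adj * Adj) u w
          = ∑ w ∈ univ.filter (fun w => c w = c u), (Adj * Adj) u w := by
        refine (Finset.sum_subset (Finset.filter_subset _ _) ?_).symm
        intro v _ hv
        simp only [mem_filter, mem_univ, true_and] at hv
        exact hA2cross u v (fun h => hv h.symm)
      have split2 : ∑ w ∈ univ.filter (fun w => c w = c u), (Adj * Adj) u w
          = (Adj * Adj) u u + ∑ w ∈ s, (Adj * Adj) u w := by
        rw [hs, Finset.add_sum_erase _ _ (by simp)]
      have htot : d * d = r + ∑ w ∈ s, (Adj * Adj) u w := by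
        rw [← hA2rowsum u, split1, split2, hA2diag u]
      have hd2 : d * d = d ^ 2 := (sq d).symm
      omega
    have hall := mySumOnes s (fun w => (Adj * Adj) u w)
      (fun w hw => by
        rw [hs, Finset.mem_erase, mem_filter] at hw
        exact hA2ge u w (fun h => hw.1 h.symm) hw.2.2.symm)
      (by rw [hsum, hucard])
    refine hall w ?_
    rw [hs, Finset.mem_erase, mem_filter]
    exact ⟨fun h => hne h.symm, mem_univ w, he.symm⟩
  -- pass to the real adjacency matrix
  set B : Matrix V V ℝ := Adj.map fun n => (n : ℝ) with hB
  set S : Matrix V V ℝ := Matrix.of fun u v => if c u = c v then (1:ℝ) else 0 with hS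
  have hBapp : ∀ u v, B u v = (Adj u v : ℝ) := fun u v => rfl
  have hB2 : B * B = ((r:ℝ) - 1) • 1 + S := by
    ext u w
    have hBB : (B * B) u w = ((Adj * Adj) u w : ℝ) := by
      rw [Matrix.mul_apply, Matrix.mul_apply, Nat.cast_sum]
      exact Finset.sum_congr rfl fun v _ => by rw [hBapp, hBapp, Nat.cast_mul]
    rw [hBB]
    by_cases he : u = w
    · subst he
      rw [hA2diag u]
      simp [hS, Matrix.one_apply_eq]
    · by_cases hcc : c u = c w
      · rw [hA2one u w he hcc]
        simp [hS, Matrix.one_apply_ne he, hcc]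
      · rw [hA2cross u w hcc]
        simp [hS, Matrix.one_apply_ne he, hcc]
  -- det (x•1 - B) = det (x•1 + B)
  have hdetsym : ∀ x : ℝ, (x • (1 : Matrix V V ℝ) - B).det = (x • 1 + B).det := by
    intro x
    set e : V → ℝ := fun v => if c v = true then 1 else -1 with he
    set Dm : Matrix V V ℝ := Matrix.diagonal e with hDm
    have hDD : Dm * Dm = 1 := by
      rw [hDm, Matrix.diagonal_mul_diagonal]
      ext u v
      rcases eq_or_ne u v with h | h
      · subst h
        rw [Matrix.diagonal_apply_eq, Matrix.one_apply_eq]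
        by_cases hcu : c u = true <;> simp [he, hcu]
      · rw [Matrix.diagonal_apply_ne _ h, Matrix.one_apply_ne h]
    have hconj : Dm * (x • 1 + B) * Dm = x • 1 - B := by
      ext u v
      rw [hDm, Matrix.mul_diagonal, Matrix.diagonal_mul]
      by_cases h : u = v
      · subst h
        have hB0 : B u u = 0 := by rw [hBapp, hdiag0]; simp
        simp only [Matrix.add_apply, Matrix.sub_apply, Matrix.smul_apply, Matrix.one_apply_eq,
          smul_eq_mul, hB0, add_zero, sub_zero, mul_one]
        by_cases hcu : c u = true <;> simp [he, hcu] <;> ring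
      · simp only [Matrix.add_apply, Matrix.sub_apply, Matrix.smul_apply,
          Matrix.one_apply_ne h, smul_eq_mul, mul_zero, zero_add, zero_sub]
        by_cases hz : Adj u v = 0
        · rw [hBapp, hz]; simp
        · have hcc := hc u v hz
          cases hcu : c u <;> cases hcv : c v <;>
            simp [he, hcu, hcv] at hcc ⊢ <;> ring
    calc (x • (1 : Matrix V V ℝ) - B).det = (Dm * (x • 1 + B) * Dm).det := by rw [hconj]
      _ = Dm.det * (x • 1 + B).det * Dm.det := by rw [Matrix.det_mul, Matrix.det_mul]
      _ = (Dm * Dm).det * (x • 1 + B).det := by rw [Matrix.det_mul]; ring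
      _ = (x • 1 + B).det := by rw [hDD, Matrix.det_one, one_mul]
  -- det (y•1 - S)
  have hdetS : ∀ y : ℝ, y ≠ 0 →
      (y • (1 : Matrix V V ℝ) - S).det = (y ^ (k+1) * (1 - ((k:ℝ)+1) / y)) ^ 2 := by
    intro y hy
    set p : V → Prop := fun v => c v = true with hp
    set ee := Equiv.sumCompl p with hee
    have hTc : Fintype.card {v // p v} = k + 1 := by
      rw [Fintype.card_subtype]; exact hT
    have hFc : Fintype.card {v // ¬ p v} = k + 1 := by
      rw [Fintype.card_subtype]; exact hF
    have hblocks : (y • (1 : Matrix V V ℝ) - S).submatrix ee ee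
        = Matrix.fromBlocks
            (y • (1 : Matrix _ _ ℝ) - Matrix.of (fun _ _ => (1:ℝ)))
            0 0
            (y • (1 : Matrix _ _ ℝ) - Matrix.of (fun _ _ => (1:ℝ))) := by
      ext i j
      rcases i with a | a <;> rcases j with b | b <;>
        simp only [Matrix.submatrix_apply, hee, Equiv.sumCompl_apply_inl,
          Equiv.sumCompl_apply_inr, Matrix.fromBlocks_apply₁₁, Matrix.fromBlocks_apply₁₂,
          Matrix.fromBlocks_apply₂₁, Matrix.fromBlocks_apply₂₂, Matrix.sub_apply,
          Matrix.smul_apply, Matrix.zero_apply, smul_eq_mul, hS, Matrix.of_apply,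
          Matrix.one_apply]
      · have ha' : c (a:V) = true := a.prop
        have hb' : c (b:V) = true := b.prop
        rw [ha', hb']
        simp [Subtype.coe_inj]
      · have ha' : c (a:V) = true := a.prop
        have hb' : c (b:V) = false := by simpa [hp] using b.prop
        have hne : (a:V) ≠ (b:V) := fun h => by rw [h, hb'] at ha'; cases ha'
        simp [hne, ha', hb']
      · have ha' : c (a:V) = false := by simpa [hp] using a.prop
        have hb' : c (b:V) = true := b.prop
        have hne : (a:V) ≠ (b:V) := fun h => by rw [← h, ha'] at hb'; cases hb'
        simp [hne, ha', hb']
      · have ha' : c (a:V) = false := by simpa [hp] using a.prop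
        have hb' : c (b:V) = false := by simpa [hp] using b.prop
        rw [ha', hb']
        simp [Subtype.coe_inj]
    rw [← Matrix.det_submatrix_equiv_self ee, hblocks, Matrix.det_fromBlocks_zero₂₁,
      myDetJ y hy, myDetJ y hy, hTc, hFc]
    push_cast
    ring
  -- matrix factorization identity
  have hmulid : ∀ x : ℝ, (x • (1 : Matrix V V ℝ) - B) * (x • 1 + B)
      = (x ^ 2 - ((r:ℝ) - 1)) • 1 - S := by
    intro x
    have e1 : (x • (1 : Matrix V V ℝ)) * (x • 1) = (x * x) • 1 := by
      rw [smul_mul_assoc, mul_smul_comm, smul_smul, mul_one]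
    have e2 : (x • (1 : Matrix V V ℝ)) * B = x • B := by rw [smul_mul_assoc, one_mul]
    have e3 : B * (x • (1 : Matrix V V ℝ)) = x • B := by rw [mul_smul_comm, mul_one]
    have expand : (x • (1 : Matrix V V ℝ) - B) * (x • 1 + B) = (x * x) • 1 - B * B := by
      rw [sub_mul, mul_add, mul_add, e1, e2, e3]
      abel
    rw [expand, hB2, pow_two, sub_add_eq_sub_sub]
    conv_rhs => rw [sub_smul]
  -- the two polynomials
  set P : ℝ[X] := B.charpoly with hPdef
  set Q : ℝ[X] := (X - C (d:ℝ)) * (X + C (d:ℝ)) * (X ^ 2 - C ((r:ℝ) - 1)) ^ k with hQdef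
  have hPm : P.Monic := Matrix.charpoly_monic _
  have hQm : Q.Monic :=
    ((monic_X_sub_C _).mul (monic_X_add_C _)).mul ((monic_X_pow_sub_C _ two_ne_zero).pow _)
  have hd2 : ((d:ℝ)) ^ 2 = (r:ℝ) + (k:ℝ) := by
    have := congrArg (fun t : ℕ => (t : ℝ)) hk
    push_cast at this
    exact this
  have hsq : P * P = Q * Q := by
    apply Polynomial.eq_of_infinite_eval_eq
    refine Set.Infinite.mono ?_ (Set.Ioi_infinite ((d:ℝ) + (r:ℝ) + 2))
    intro x hx
    simp only [Set.mem_Ioi] at hx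
    simp only [Set.mem_setOf_eq, eval_mul]
    have hd0 : (0:ℝ) ≤ (d:ℝ) := Nat.cast_nonneg d
    have hr0 : (0:ℝ) ≤ (r:ℝ) := Nat.cast_nonneg r
    have hx1 : 1 < x := by linarith
    set y : ℝ := x ^ 2 - ((r:ℝ) - 1) with hy
    have hypos : 0 < y := by nlinarith
    have hy0 : y ≠ 0 := ne_of_gt hypos
    calc eval x P * eval x P
        = (x • (1 : Matrix V V ℝ) - B).det * (x • 1 + B).det := by
          rw [hPdef, myEvalCharpoly, hdetsym x]
      _ = ((x • (1 : Matrix V V ℝ) - B) * (x • 1 + B)).det := (Matrix.det_mul _ _).symm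
      _ = (y • (1 : Matrix V V ℝ) - S).det := by rw [hmulid x, ← hy]
      _ = (y ^ (k + 1) * (1 - ((k:ℝ) + 1) / y)) ^ 2 := hdetS y hy0
      _ = eval x Q * eval x Q := by
          have e1 : y ^ (k + 1) * (1 - ((k:ℝ) + 1) / y) = y ^ k * (y - ((k:ℝ) + 1)) := by
            field_simp
            ring
          have e2 : y - ((k:ℝ) + 1) = (x - (d:ℝ)) * (x + (d:ℝ)) := by
            rw [hy]
            linear_combination hd2
          rw [e1, e2, hQdef]
          simp only [eval_mul, eval_pow, eval_sub, eval_add, eval_X, eval_C]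
          rw [← hy]
          ring
  have h0 : (P - Q) * (P + Q) = 0 := by linear_combination hsq
  rcases mul_eq_zero.mp h0 with h | h
  · exact sub_eq_zero.mp h
  · exfalso
    have hPQ : P = -Q := eq_neg_of_add_eq_zero_left h
    have hlc := hPm.leadingCoeff
    rw [hPQ, leadingCoeff_neg, hQm.leadingCoeff] at hlc
    norm_num at hlc
end

section
/- For every integer z ≥ 1, setting d = z + 1, there exists a bipartite mixed graph on a finite vertex set V that is totally regular with degrees (1, z), has diameter exactly 3, and has card V = 2d² vertices; that is, Moore bipartite mixed graphs with diameter k = 3 and r = 1 exist for every value of z ≥ 1 (attaining the Moore bound M_B(1, z, 3) = 2(d² − 1 + 1) = 2d²). -/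
section MooreAux

open Finset

abbrev MV (d : ℕ) := Bool × Fin d × Fin d

def mgFun (d : ℕ) : MV d → MV d → ℕ
  | (false, i, _), (true, a, _) => if a = i then 1 else 0
  | (true, _, j), (false, _, b) => if b = j then 1 else 0
  | (false, _, _), (false, _, _) => 0
  | (true, _, _), (true, _, _) => 0

def MG (d : ℕ) : Matrix (MV d) (MV d) ℕ := Matrix.of (mgFun d)

@[simp] lemma MG_ft (d : ℕ) (i j a b : Fin d) :
    MG d (false, i, j) (true, a, b) = if a = i then 1 else 0 := rfl
@[simp] lemma MG_tf (d : ℕ) (i j a b : Fin d) :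
    MG d (true, i, j) (false, a, b) = if b = j then 1 else 0 := rfl
@[simp] lemma MG_ff (d : ℕ) (i j a b : Fin d) :
    MG d (false, i, j) (false, a, b) = 0 := rfl
@[simp] lemma MG_tt (d : ℕ) (i j a b : Fin d) :
    MG d (true, i, j) (true, a, b) = 0 := rfl

lemma MG_same (d : ℕ) (u v : MV d) (h : u.1 = v.1) : MG d u v = 0 := by
  obtain ⟨s, i, j⟩ := u; obtain ⟨t, a, b⟩ := v
  cases s <;> cases t <;> simp_all

lemma ite01 (c : Prop) [Decidable c] : ((if c then (1:ℕ) else 0) = 1) ↔ c := by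
  split_ifs with h <;> simp [h]
lemma ite00 (c : Prop) [Decidable c] : ((if c then (1:ℕ) else 0) = 0) ↔ ¬c := by
  split_ifs with h <;> simp [h]

lemma card_mutual (d : ℕ) (u : MV d) :
    (univ.filter fun v => MG d u v = 1 ∧ MG d v u = 1).card = 1 := by
  obtain ⟨s, i, j⟩ := u
  have : (univ.filter fun v : MV d => MG d (s,i,j) v = 1 ∧ MG d v (s,i,j) = 1)
      = {(!s, i, j)} := by
    ext ⟨t, a, b⟩
    cases s <;> cases t <;>
      simp [ite01, Prod.ext_iff, and_comm, eq_comm] <;> split_ifs <;> simp_all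
  rw [this, card_singleton]

lemma card_out (d : ℕ) (u : MV d) :
    (univ.filter fun v => MG d u v = 1 ∧ MG d v u = 0).card = d - 1 := by
  obtain ⟨s, i, j⟩ := u
  cases s
  · have : (univ.filter fun v : MV d => MG d (false,i,j) v = 1 ∧ MG d v (false,i,j) = 0)
        = (univ.erase j).image (fun b => ((true, i, b) : MV d)) := by
      ext ⟨t, a, b⟩
      cases t <;>
        simp [ite01, ite00, Prod.ext_iff, eq_comm, and_comm, and_assoc] <;> split_ifs <;> simp_all
    rw [this, card_image_of_injective _ (by intro x y h; simpa [Prod.ext_iff] using h),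
      card_erase_of_mem (mem_univ _), card_univ, Fintype.card_fin]
  · have : (univ.filter fun v : MV d => MG d (true,i,j) v = 1 ∧ MG d v (true,i,j) = 0)
        = (univ.erase i).image (fun a => ((false, a, j) : MV d)) := by
      ext ⟨t, a, b⟩
      cases t <;>
        simp [ite01, ite00, Prod.ext_iff, eq_comm, and_comm, and_assoc] <;> split_ifs <;> simp_all
    rw [this, card_image_of_injective _ (by intro x y h; simpa [Prod.ext_iff] using h),
      card_erase_of_mem (mem_univ _), card_univ, Fintype.card_fin]

lemma card_in (d : ℕ) (u : MV d) :
    (univ.filter fun v => MG d v u = 1 ∧ MG d u v = 0).card = d - 1 := by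
  obtain ⟨s, i, j⟩ := u
  cases s
  · have : (univ.filter fun v : MV d => MG d v (false,i,j) = 1 ∧ MG d (false,i,j) v = 0)
        = (univ.erase i).image (fun a => ((true, a, j) : MV d)) := by
      ext ⟨t, a, b⟩
      cases t <;>
        simp [ite01, ite00, Prod.ext_iff, eq_comm, and_comm, and_assoc] <;> split_ifs <;> simp_all
    rw [this, card_image_of_injective _ (by intro x y h; simpa [Prod.ext_iff] using h),
      card_erase_of_mem (mem_univ _), card_univ, Fintype.card_fin]
  · have : (univ.filter fun v : MV d => MG d v (true,i,j) = 1 ∧ MG d (true,i,j) v = 0)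
        = (univ.erase j).image (fun b => ((false, i, b) : MV d)) := by
      ext ⟨t, a, b⟩
      cases t <;>
        simp [ite01, ite00, Prod.ext_iff, eq_comm, and_comm, and_assoc] <;> split_ifs <;> simp_all
    rw [this, card_image_of_injective _ (by intro x y h; simpa [Prod.ext_iff] using h),
      card_erase_of_mem (mem_univ _), card_univ, Fintype.card_fin]

lemma two_step (d : ℕ) (u v : MV d) (h : u.1 = v.1) : 0 < (MG d ^ 2) u v := by
  obtain ⟨s, i, j⟩ := u; obtain ⟨t, a, b⟩ := v
  rw [pow_two, Matrix.mul_apply]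
  simp only [Prod.fst] at h; subst h
  cases s
  · refine lt_of_lt_of_le ?_ (Finset.single_le_sum
      (f := fun x => MG d (false, i, j) x * MG d x (false, a, b))
      (fun x _ => Nat.zero_le _) (Finset.mem_univ ((true, i, b) : MV d)))
    simp
  · refine lt_of_lt_of_le ?_ (Finset.single_le_sum
      (f := fun x => MG d (true, i, j) x * MG d x (true, a, b))
      (fun x _ => Nat.zero_le _) (Finset.mem_univ ((false, a, j) : MV d)))
    simp

lemma three_step (d : ℕ) (u v : MV d) (h : u.1 ≠ v.1) : 0 < (MG d ^ 3) u v := by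
  have h3 : MG d ^ 3 = MG d ^ 2 * MG d := by rw [pow_succ]
  rw [h3, Matrix.mul_apply]
  refine lt_of_lt_of_le ?_ (Finset.single_le_sum
    (f := fun x => (MG d ^ 2) u x * MG d x v)
    (fun x _ => Nat.zero_le _) (Finset.mem_univ ((u.1, v.2) : MV d)))
  have h1 : 0 < (MG d ^ 2) u (u.1, v.2) := two_step d u _ rfl
  have h2 : MG d (u.1, v.2) v = 1 := by
    obtain ⟨s, i, j⟩ := u; obtain ⟨t, a, b⟩ := v
    cases s <;> cases t <;> simp_all
  simpa [h2] using h1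

lemma sq_zero (d : ℕ) (u v : MV d) (h : u.1 ≠ v.1) : (MG d ^ 2) u v = 0 := by
  rw [pow_two, Matrix.mul_apply]
  refine Finset.sum_eq_zero fun x _ => ?_
  by_cases hx : u.1 = x.1
  · rw [MG_same d u x hx, zero_mul]
  · have hxv : x.1 = v.1 := by
      cases hu : u.1 <;> cases hxx : x.1 <;> cases hv : v.1 <;> simp_all
    rw [MG_same d x v hxv, mul_zero]

lemma MG_le_one (d : ℕ) (u v : MV d) : MG d u v ≤ 1 := by
  obtain ⟨s, i, j⟩ := u; obtain ⟨t, a, b⟩ := v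
  cases s <;> cases t <;> simp <;> split_ifs <;> simp

lemma card_filter_equiv {α β : Type*} [Fintype α] [Fintype β] [DecidableEq β]
    (e : α ≃ β) (p : α → Prop) [DecidablePred p] :
    (Finset.univ.filter fun b => p (e.symm b)).card = (Finset.univ.filter p).card := by
  rw [← Finset.card_map e.symm.toEmbedding]
  congr 1
  ext a
  simp only [Finset.mem_map, Finset.mem_filter, Finset.mem_univ, true_and,
    Equiv.coe_toEmbedding]
  constructor
  · rintro ⟨b, hb, rfl⟩; exact hb
  · intro h; exact ⟨e a, by simpa using h, by simp⟩


end MooreAux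

theorem stmt_14 (z : ℕ) (hz : 1 ≤ z) :
    ∃ Adj : Matrix (Fin (2 * (z + 1)^2)) (Fin (2 * (z + 1)^2)) ℕ,
      IsMixedGraph Adj ∧ IsTotallyRegular Adj 1 z ∧ IsBipartiteMixed Adj ∧
      DiamExactly Adj 3 := by
  set d : ℕ := z + 1 with hd
  have hcard : Fintype.card (MV d) = 2 * (z + 1) ^ 2 := by
    simp [MV, hd]; ring
  let e : MV d ≃ Fin (2 * (z + 1) ^ 2) := Fintype.equivFinOfCardEq hcard
  let Adj : Matrix (Fin (2 * (z + 1)^2)) (Fin (2 * (z + 1)^2)) ℕ :=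
    Matrix.reindexAlgEquiv ℕ ℕ e (MG d)
  have hAdj : ∀ a b, Adj a b = MG d (e.symm a) (e.symm b) := fun a b => rfl
  have hAdjEq : Adj = Matrix.reindexAlgEquiv ℕ ℕ e (MG d) := rfl
  refine ⟨Adj, ⟨fun u v => ?_, fun u => ?_⟩, ?_, ?_, ?_, ?_⟩
  · rw [hAdj]; exact MG_le_one d _ _
  · rw [hAdj]; exact MG_same d _ _ rfl
  · -- totally regular
    intro u'
    refine ⟨?_, ?_, ?_⟩
    · have h := card_filter_equiv e
        (fun v => MG d (e.symm u') v = 1 ∧ MG d v (e.symm u') = 1)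
      exact h.trans (card_mutual d (e.symm u'))
    · have h := card_filter_equiv e
        (fun v => MG d (e.symm u') v = 1 ∧ MG d v (e.symm u') = 0)
      exact h.trans ((card_out d (e.symm u')).trans (by omega))
    · have h := card_filter_equiv e
        (fun v => MG d v (e.symm u') = 1 ∧ MG d (e.symm u') v = 0)
      exact h.trans ((card_in d (e.symm u')).trans (by omega))
  · -- bipartite
    refine ⟨fun v => (e.symm v).1, fun u v h hc => h ?_⟩
    rw [hAdj]; exact MG_same d _ _ hc
  · -- diameter at most 3
    intro u' v'
    have hsum : (∑ i ∈ Finset.range 4, Adj ^ i)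
        = Matrix.reindexAlgEquiv ℕ ℕ e (∑ i ∈ Finset.range 4, MG d ^ i) := by
      rw [map_sum]
      refine Finset.sum_congr rfl fun i _ => ?_
      rw [hAdjEq, ← map_pow]
    rw [hsum]
    have hentry : (Matrix.reindexAlgEquiv ℕ ℕ e (∑ i ∈ Finset.range 4, MG d ^ i)) u' v'
        = (∑ i ∈ Finset.range 4, MG d ^ i) (e.symm u') (e.symm v') := rfl
    rw [hentry, Matrix.sum_apply]
    by_cases h : (e.symm u').1 = (e.symm v').1
    · refine lt_of_lt_of_le (two_step d _ _ h) (Finset.single_le_sum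
        (f := fun i => (MG d ^ i) (e.symm u') (e.symm v'))
        (fun i _ => Nat.zero_le _) (Finset.mem_range.mpr (by norm_num)))
    · refine lt_of_lt_of_le (three_step d _ _ h) (Finset.single_le_sum
        (f := fun i => (MG d ^ i) (e.symm u') (e.symm v'))
        (fun i _ => Nat.zero_le _) (Finset.mem_range.mpr (by norm_num)))
  · -- diameter not less than 3
    have hd2 : 1 < d := by omega
    refine ⟨e (false, ⟨0, by omega⟩, ⟨0, by omega⟩), e (true, ⟨1, hd2⟩, ⟨0, by omega⟩), ?_⟩
    have hsum : (∑ i ∈ Finset.range 3, Adj ^ i)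
        = Matrix.reindexAlgEquiv ℕ ℕ e (∑ i ∈ Finset.range 3, MG d ^ i) := by
      rw [map_sum]
      refine Finset.sum_congr rfl fun i _ => ?_
      rw [hAdjEq, ← map_pow]
    rw [hsum]
    have hentry : ∀ M : Matrix (MV d) (MV d) ℕ, ∀ a b : MV d,
        (Matrix.reindexAlgEquiv ℕ ℕ e M) (e a) (e b) = M a b := by
      intro M a b
      simp [Matrix.reindexAlgEquiv_apply, Matrix.reindex_apply]
    rw [hentry, Matrix.sum_apply]
    rw [Finset.sum_range_succ, Finset.sum_range_succ, Finset.sum_range_one]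
    have h0 : (MG d ^ 0) (false, ⟨0, by omega⟩, ⟨0, by omega⟩) (true, ⟨1, hd2⟩, ⟨0, by omega⟩) = 0 := by
      rw [pow_zero]
      exact Matrix.one_apply_ne (by simp)
    have h1 : (MG d ^ 1) (false, ⟨0, by omega⟩, ⟨0, by omega⟩) (true, ⟨1, hd2⟩, ⟨0, by omega⟩) = 0 := by
      rw [pow_one, MG_ft]
      simp [Fin.ext_iff]
    have h2 : (MG d ^ 2) (false, ⟨0, by omega⟩, ⟨0, by omega⟩) (true, ⟨1, hd2⟩, ⟨0, by omega⟩) = 0 :=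
      sq_zero d _ _ (by simp)
    rw [h0, h1, h2]
end

section
/- There exist two bipartite mixed graphs G and G', each on 8 vertices, each totally regular with degrees (1, 1) and of diameter exactly 3 (hence each attaining the Moore bound M_B(1,1,3) = 2(2² − 1 + 1) = 8), such that G and G' are not isomorphic (there is no bijection σ of the vertex sets with A'(σu)(σv) = A(u)(v) for all u, v). -/
instance matDecLe {m n : Type*} (M : Matrix m n ℕ) (i : m) (j : n) (k : ℕ) :
    Decidable (M i j ≤ k) := Nat.decLe _ _

instance matDecLt {m n : Type*} (M : Matrix m n ℕ) (i : m) (j : n) (k : ℕ) :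
    Decidable (k < M i j) := Nat.decLt _ _

instance matDecEqNat {m n : Type*} (M : Matrix m n ℕ) (i : m) (j : n) (k : ℕ) :
    Decidable (M i j = k) := instDecidableEqNat _ _

instance matDecEq {m n : Type*} (M N : Matrix m n ℕ) (i : m) (j : n) (i' : m) (j' : n) :
    Decidable (M i j = N i' j') := instDecidableEqNat _ _

/-- First example matrix. -/
def mixEx1 : Matrix (Fin 8) (Fin 8) ℕ :=
  !![0,0,0,0,1,1,0,0; 0,0,0,0,1,1,0,0; 0,0,0,0,0,0,1,1; 0,0,0,0,0,0,1,1;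
     1,0,1,0,0,0,0,0; 0,1,0,1,0,0,0,0; 1,0,1,0,0,0,0,0; 0,1,0,1,0,0,0,0]

/-- Second example matrix. -/
def mixEx2 : Matrix (Fin 8) (Fin 8) ℕ :=
  !![0,0,0,0,1,1,0,0; 0,0,0,0,1,1,0,0; 0,0,0,0,0,0,1,1; 0,0,0,0,0,0,1,1;
     1,0,0,1,0,0,0,0; 0,1,1,0,0,0,0,0; 1,0,1,0,0,0,0,0; 0,1,0,1,0,0,0,0]

theorem mixEx_noniso :
    ¬ ∃ σ : Fin 8 ≃ Fin 8, ∀ u v : Fin 8, mixEx2 (σ u) (σ v) = mixEx1 u v := by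
  rintro ⟨σ, h⟩
  have P : ∀ a b : Fin 8, a ≠ b → (∀ x, mixEx2 a x = mixEx2 b x) → a.val < 4 := by decide
  have rows : ∀ u v : Fin 8, (∀ w, mixEx1 u w = mixEx1 v w) →
      ∀ x, mixEx2 (σ u) x = mixEx2 (σ v) x := by
    intro u v huv x
    have h1 := h u (σ.symm x)
    have h2 := h v (σ.symm x)
    rw [σ.apply_symm_apply] at h1 h2
    rw [h1, h2, huv]
  have pair : ∀ u v : Fin 8, u ≠ v → (∀ w, mixEx1 u w = mixEx1 v w) → (σ u).val < 4 := by
    intro u v huv hrow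
    exact P (σ u) (σ v) (fun he => huv (σ.injective he)) (rows u v hrow)
  have key : ∀ u : Fin 8, (σ u).val < 4 := by
    intro u
    fin_cases u
    · exact pair 0 1 (by decide) (by decide)
    · exact pair 1 0 (by decide) (by decide)
    · exact pair 2 3 (by decide) (by decide)
    · exact pair 3 2 (by decide) (by decide)
    · exact pair 4 6 (by decide) (by decide)
    · exact pair 5 7 (by decide) (by decide)
    · exact pair 6 4 (by decide) (by decide)
    · exact pair 7 5 (by decide) (by decide)
  have main : ¬ ∃ f : Fin 8 → Fin 8, Function.Injective f ∧ ∀ u, (f u).val < 4 := by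
    rintro ⟨f, hinj, hlt⟩
    have hc : (Finset.univ : Finset (Fin 8)).card ≤
        ((Finset.univ : Finset (Fin 8)).filter (fun x => x.val < 4)).card := by
      apply Finset.card_le_card_of_injOn f
      · intro u _; simp [hlt u]
      · exact fun a _ b _ hab => hinj hab
    revert hc; decide
  exact main ⟨σ, σ.injective, key⟩

theorem stmt_15 :
    ∃ Adj Adj' : Matrix (Fin 8) (Fin 8) ℕ,
      (IsMixedGraph Adj ∧ IsTotallyRegular Adj 1 1 ∧ IsBipartiteMixed Adj ∧
        DiamExactly Adj 3) ∧
      (IsMixedGraph Adj' ∧ IsTotallyRegular Adj' 1 1 ∧ IsBipartiteMixed Adj' ∧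
        DiamExactly Adj' 3) ∧
      ¬ ∃ σ : Fin 8 ≃ Fin 8, ∀ u v : Fin 8, Adj' (σ u) (σ v) = Adj u v := by
  refine ⟨mixEx1, mixEx2,
    ⟨⟨by decide, by decide⟩, by unfold IsTotallyRegular; decide, ⟨fun v => decide (v.val < 4), by decide⟩,
      by unfold DiamAtMost; decide, ⟨0, 6, by decide⟩⟩,
    ⟨⟨by decide, by decide⟩, by unfold IsTotallyRegular; decide, ⟨fun v => decide (v.val < 4), by decide⟩,
      by unfold DiamAtMost; decide, ⟨0, 6, by decide⟩⟩,
    mixEx_noniso⟩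
end

section
/- Let r ≥ 1, z ≥ 1 and k ≥ 2 be integers, and let G be a bipartite mixed graph on a finite vertex set V that is totally regular with degrees (r, z), has diameter exactly k, and satisfies (card V : ℝ) = M_B(r, z, k) (a mixed bipartite Moore graph). Then shortest paths of length less than k are unique: for any vertices u, v, if j < k is the least index with (A^j) u v > 0, then (A^j) u v = 1. -/
def Nrec (r z : ℕ) : ℕ → ℕ
  | 0 => 1
  | 1 => r + z
  | (n+2) => (r + z - 1) * Nrec r z (n+1) + z * Nrec r z n

set_option linter.unusedSectionVars false

namespace MB

noncomputable def s (r z : ℕ) : ℝ := Real.sqrt (((r:ℝ) + (z:ℝ) - 1)^2 + 4 * (z:ℝ))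
noncomputable def u1 (r z : ℕ) : ℝ := ((r:ℝ) + (z:ℝ) - 1 - s r z) / 2
noncomputable def u2 (r z : ℕ) : ℝ := ((r:ℝ) + (z:ℝ) - 1 + s r z) / 2
noncomputable def cA (r z : ℕ) : ℝ := (s r z - ((r:ℝ) + (z:ℝ) + 1)) / (2 * s r z)
noncomputable def cB (r z : ℕ) : ℝ := (s r z + ((r:ℝ) + (z:ℝ) + 1)) / (2 * s r z)

lemma moore_eq (r z k : ℕ) : mooreBoundBip r z k =
    2 * (cA r z * ((u1 r z) ^ (k + 1) - u1 r z) / ((u1 r z)^2 - 1)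
      + cB r z * ((u2 r z) ^ (k + 1) - u2 r z) / ((u2 r z)^2 - 1)) := rfl

variable {r z : ℕ}

lemma s_pos (hz : 1 ≤ z) : 0 < s r z := by
  apply Real.sqrt_pos.2
  have hz1 : (1:ℝ) ≤ (z:ℝ) := by exact_mod_cast hz
  nlinarith [sq_nonneg ((r:ℝ) + z - 1)]

lemma s_sq : (s r z)^2 = ((r:ℝ) + (z:ℝ) - 1)^2 + 4 * (z:ℝ) := by
  apply Real.sq_sqrt
  have : (0:ℝ) ≤ (z:ℝ) := Nat.cast_nonneg z
  nlinarith [sq_nonneg ((r:ℝ) + z - 1)]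

lemma quad1 : (u1 r z)^2 = ((r:ℝ) + z - 1) * u1 r z + z := by
  have h := s_sq (r := r) (z := z)
  unfold u1
  linear_combination h / 4

lemma quad2 : (u2 r z)^2 = ((r:ℝ) + z - 1) * u2 r z + z := by
  have h := s_sq (r := r) (z := z)
  unfold u2
  linear_combination h / 4

lemma hAB (hz : 1 ≤ z) : cA r z + cB r z = 1 := by
  have h := (s_pos (r := r) hz).ne'
  unfold cA cB
  field_simp
  ring

lemma hN1 (hz : 1 ≤ z) : cA r z * u1 r z + cB r z * u2 r z = (r:ℝ) + z := by
  have h := (s_pos (r := r) hz).ne'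
  unfold cA cB u1 u2
  field_simp
  ring

lemma hcross (hz : 1 ≤ z) : cA r z * u2 r z + cB r z * u1 r z = -1 := by
  have h := (s_pos (r := r) hz).ne'
  unfold cA cB u1 u2
  field_simp
  ring

lemma sq_ne_one1 (hr : 1 ≤ r) (hz : 1 ≤ z) : (u1 r z)^2 - 1 ≠ 0 := by
  intro h
  have hq := quad1 (r := r) (z := z)
  have hr1 : (1:ℝ) ≤ (r:ℝ) := by exact_mod_cast hr
  have hz1 : (1:ℝ) ≤ (z:ℝ) := by exact_mod_cast hz
  have hcases : u1 r z = 1 ∨ u1 r z = -1 := by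
    have : (u1 r z - 1) * (u1 r z + 1) = 0 := by nlinarith
    rcases mul_eq_zero.1 this with h' | h'
    · left; linarith
    · right; linarith
  rcases hcases with h' | h' <;> rw [h'] at hq <;> nlinarith

lemma sq_ne_one2 (hr : 1 ≤ r) (hz : 1 ≤ z) : (u2 r z)^2 - 1 ≠ 0 := by
  intro h
  have hq := quad2 (r := r) (z := z)
  have hr1 : (1:ℝ) ≤ (r:ℝ) := by exact_mod_cast hr
  have hz1 : (1:ℝ) ≤ (z:ℝ) := by exact_mod_cast hz
  have hcases : u2 r z = 1 ∨ u2 r z = -1 := by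
    have : (u2 r z - 1) * (u2 r z + 1) = 0 := by nlinarith
    rcases mul_eq_zero.1 this with h' | h'
    · left; linarith
    · right; linarith
  rcases hcases with h' | h' <;> rw [h'] at hq <;> nlinarith

lemma Nrec_closed (hr : 1 ≤ r) (hz : 1 ≤ z) :
    ∀ j : ℕ, (Nrec r z j : ℝ) = cA r z * (u1 r z)^j + cB r z * (u2 r z)^j := by
  intro j
  induction j using Nat.twoStepInduction with
  | zero => simpa [Nrec] using (hAB (r := r) hz).symm
  | one => simpa [Nrec] using (hN1 (r := r) hz).symm
  | more n ih1 ih2 =>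
    have hcast : ((Nrec r z (n+2) : ℕ) : ℝ)
        = ((r:ℝ) + z - 1) * (Nrec r z (n+1) : ℝ) + (z:ℝ) * (Nrec r z n : ℝ) := by
      have hge : 1 ≤ r + z := le_trans hr (Nat.le_add_right r z)
      have h1 : ((r + z - 1 : ℕ) : ℝ) = (r:ℝ) + z - 1 := by
        push_cast [Nat.cast_sub hge]
        ring
      show (((r + z - 1) * Nrec r z (n+1) + z * Nrec r z n : ℕ) : ℝ) = _
      push_cast [h1]
      ring
    rw [hcast, ih1, ih2]
    have q1 := quad1 (r := r) (z := z)
    have q2 := quad2 (r := r) (z := z)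
    have e1 : (u1 r z)^(n+2) = (u1 r z)^n * (((r:ℝ) + z - 1) * u1 r z + z) := by
      rw [← q1]; ring
    have e2 : (u2 r z)^(n+2) = (u2 r z)^n * (((r:ℝ) + z - 1) * u2 r z + z) := by
      rw [← q2]; ring
    rw [e1, e2]; ring

end MB

namespace MB

lemma geom_odd (u : ℝ) (hu : u^2 - 1 ≠ 0) (m : ℕ) :
    ∑ j ∈ (Finset.range (2*m)).filter (fun j => j % 2 = 1), u^j
      = (u^(2*m+1) - u) / (u^2 - 1) := by
  rw [eq_div_iff hu]
  induction m with
  | zero => simp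
  | succ m ih =>
    have h2 : 2*(m+1) = (2*m+1)+1 := by ring
    rw [h2, Finset.range_add_one, Finset.range_add_one, Finset.filter_insert, Finset.filter_insert]
    have he : ¬ ((2*m) % 2 = 1) := by omega
    have ho : (2*m+1) % 2 = 1 := by omega
    simp only [he, ho, if_true, if_false, ite_true, ite_false]
    rw [Finset.sum_insert (by simp)]
    rw [add_mul, ih]
    ring

lemma geom_even (u : ℝ) (hu : u^2 - 1 ≠ 0) (m : ℕ) :
    ∑ j ∈ (Finset.range (2*m+1)).filter (fun j => j % 2 = 0), u^j
      = (u^(2*m+2) - 1) / (u^2 - 1) := by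
  rw [eq_div_iff hu]
  induction m with
  | zero => norm_num [Finset.filter_singleton]
  | succ m ih =>
    have h2 : 2*(m+1)+1 = ((2*m+1)+1)+1 := by ring
    rw [h2, Finset.range_add_one, Finset.range_add_one, Finset.filter_insert, Finset.filter_insert]
    have he : ((2*m+1)+1) % 2 = 0 := by omega
    have ho : ¬ ((2*m+1) % 2 = 0) := by omega
    simp only [he, ho, if_true, if_false, ite_true, ite_false]
    rw [Finset.sum_insert (by simp)]
    rw [add_mul, ih]
    have : 2*(m+1)+2 = ((2*m+1)+1)+2 := by ring
    rw [this]
    ring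

lemma moore_eq_sum {r z : ℕ} (hr : 1 ≤ r) (hz : 1 ≤ z) (k : ℕ) (hk : 1 ≤ k) :
    mooreBoundBip r z k
      = 2 * ∑ j ∈ (Finset.range k).filter (fun j => j % 2 = (k-1) % 2), (Nrec r z j : ℝ) := by
  have hsq1 := sq_ne_one1 (r := r) (z := z) hr hz
  have hsq2 := sq_ne_one2 (r := r) (z := z) hr hz
  have hsum : ∀ (P : ℕ → Prop) [DecidablePred P],
      ∑ j ∈ (Finset.range k).filter (fun j => P j), (Nrec r z j : ℝ)
        = cA r z * (∑ j ∈ (Finset.range k).filter (fun j => P j), (u1 r z)^j)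
          + cB r z * (∑ j ∈ (Finset.range k).filter (fun j => P j), (u2 r z)^j) := by
    intro P _
    rw [Finset.mul_sum, Finset.mul_sum, ← Finset.sum_add_distrib]
    exact Finset.sum_congr rfl (fun j _ => Nrec_closed hr hz j)
  rw [moore_eq]
  rcases Nat.even_or_odd k with he | ho
  · -- k even, k = 2m, parity (k-1)%2 = 1
    obtain ⟨m, hm⟩ := he
    have hm' : k = 2*m := by omega
    have hpar : (k-1) % 2 = 1 := by omega
    rw [hpar, hsum]
    rw [hm', geom_odd _ hsq1, geom_odd _ hsq2]
    have hk1 : 2*m+1 = k+1 := by omega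
    rw [hk1]
    ring
  · -- k odd, k = 2m+1, parity 0
    obtain ⟨m, hm⟩ := ho
    have hpar : (k-1) % 2 = 0 := by omega
    rw [hpar, hsum]
    rw [hm, geom_even _ hsq1, geom_even _ hsq2]
    have hk1 : 2*m+2 = k+1 := by omega
    rw [hk1]
    -- now need: 2*(cA*(u1^(k+1)-u1)/(u1^2-1) + cB*(u2^(k+1)-u2)/(u2^2-1))
    --        =  2*(cA*((u1^(k+1)-1)/(u1^2-1)) + cB*((u2^(k+1)-1)/(u2^2-1)))
    have key : cA r z * (u2 r z + 1) + cB r z * (u1 r z + 1) = 0 := by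
      have h1 := hcross (r := r) hz
      have h2 := hAB (r := r) hz
      linear_combination h1 + h2
    have h1p : u1 r z + 1 ≠ 0 := by
      intro h; apply hsq1; linear_combination (u1 r z - 1) * h
    have h1m : u1 r z - 1 ≠ 0 := by
      intro h; apply hsq1; linear_combination (u1 r z + 1) * h
    have h2p : u2 r z + 1 ≠ 0 := by
      intro h; apply hsq2; linear_combination (u2 r z - 1) * h
    have h2m : u2 r z - 1 ≠ 0 := by
      intro h; apply hsq2; linear_combination (u2 r z + 1) * h
    have e1 : cA r z * ((u1 r z)^(k+1) - u1 r z) / ((u1 r z)^2 - 1)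
        = cA r z * (((u1 r z)^(k+1) - 1) / ((u1 r z)^2 - 1)) - cA r z / (u1 r z + 1) := by
      field_simp
      ring
    have e2 : cB r z * ((u2 r z)^(k+1) - u2 r z) / ((u2 r z)^2 - 1)
        = cB r z * (((u2 r z)^(k+1) - 1) / ((u2 r z)^2 - 1)) - cB r z / (u2 r z + 1) := by
      field_simp
      ring
    have e3 : cA r z / (u1 r z + 1) + cB r z / (u2 r z + 1) = 0 := by
      rw [div_add_div _ _ h1p h2p, div_eq_zero_iff]
      left
      linear_combination key
    rw [e1, e2]
    ring_nf
    ring_nf at e3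
    linarith [e3]

end MB

namespace MB
variable {V : Type*} [Fintype V] [DecidableEq V]

noncomputable def ell (Adj : Matrix V V ℕ) (u v : V) : ℕ := sInf {j | 0 < (Adj ^ j) u v}

open Classical in
noncomputable def Sd (Adj : Matrix V V ℕ) (u : V) (j : ℕ) : Finset V :=
  Finset.univ.filter fun v => ell Adj u v = j

noncomputable def Wc (Adj : Matrix V V ℕ) (u : V) (j : ℕ) : ℕ :=
  ∑ v ∈ Sd Adj u j, (Adj ^ j) u v

lemma mem_Sd {Adj : Matrix V V ℕ} {u v : V} {j : ℕ} : v ∈ Sd Adj u j ↔ ell Adj u v = j := by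
  simp [Sd]

lemma natsum_pos_iff {α : Type*} {s : Finset α} {f : α → ℕ} :
    0 < ∑ x ∈ s, f x ↔ ∃ x ∈ s, 0 < f x := by
  rw [Nat.pos_iff_ne_zero, Ne, Finset.sum_eq_zero_iff]
  push_neg
  simp [Nat.pos_iff_ne_zero]

lemma pow_apply_succ (Adj : Matrix V V ℕ) (j : ℕ) (u v : V) :
    (Adj ^ (j+1)) u v = ∑ w, (Adj ^ j) u w * Adj w v := by
  rw [pow_succ, Matrix.mul_apply]

lemma step_exists {Adj : Matrix V V ℕ} (hle : ∀ u v, Adj u v ≤ 1) {j : ℕ} {u v : V}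
    (h : 0 < (Adj ^ (j+1)) u v) : ∃ w, 0 < (Adj ^ j) u w ∧ Adj w v = 1 := by
  rw [pow_apply_succ] at h
  obtain ⟨w, -, hw⟩ := natsum_pos_iff.1 h
  have h1 : 0 < (Adj ^ j) u w := Nat.pos_of_ne_zero (by intro h0; rw [h0] at hw; simp at hw)
  have h2 : 0 < Adj w v := Nat.pos_of_ne_zero (by intro h0; rw [h0] at hw; simp at hw)
  have := hle w v
  exact ⟨w, h1, by omega⟩

lemma step_extend {Adj : Matrix V V ℕ} {j : ℕ} {u w v : V}
    (h : 0 < (Adj ^ j) u w) (ha : 0 < Adj w v) : 0 < (Adj ^ (j+1)) u v := by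
  rw [pow_apply_succ]
  exact natsum_pos_iff.2 ⟨w, Finset.mem_univ w, Nat.mul_pos h ha⟩

lemma ell_exists {Adj : Matrix V V ℕ} {k : ℕ} (hd : DiamAtMost Adj k) (u v : V) :
    ∃ j, 0 < (Adj ^ j) u v ∧ j ≤ k := by
  have h := hd u v
  rw [Matrix.sum_apply] at h
  obtain ⟨i, hi, hpos⟩ := natsum_pos_iff.1 h
  exact ⟨i, hpos, Nat.lt_succ_iff.1 (Finset.mem_range.1 hi)⟩

lemma ell_pos_at {Adj : Matrix V V ℕ} {k : ℕ} (hd : DiamAtMost Adj k) (u v : V) :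
    0 < (Adj ^ (ell Adj u v)) u v := by
  obtain ⟨j, hj, -⟩ := ell_exists hd u v
  exact Nat.sInf_mem (⟨j, hj⟩ : Set.Nonempty {j | 0 < (Adj ^ j) u v})

lemma ell_le {Adj : Matrix V V ℕ} {j : ℕ} {u v : V} (h : 0 < (Adj ^ j) u v) :
    ell Adj u v ≤ j := Nat.sInf_le h

lemma ell_le_k {Adj : Matrix V V ℕ} {k : ℕ} (hd : DiamAtMost Adj k) (u v : V) :
    ell Adj u v ≤ k := by
  obtain ⟨j, hj, hjk⟩ := ell_exists hd u v
  exact le_trans (ell_le hj) hjk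

lemma not_pos_of_lt_ell {Adj : Matrix V V ℕ} {i : ℕ} {u v : V} (h : i < ell Adj u v) :
    ¬ 0 < (Adj ^ i) u v := Nat.notMem_of_lt_sInf (s := {j | 0 < (Adj ^ j) u v}) h

lemma ell_self {Adj : Matrix V V ℕ} (u : V) : ell Adj u u = 0 := by
  have : 0 < (Adj ^ 0) u u := by simp [Matrix.one_apply_eq]
  exact Nat.le_zero.1 (ell_le this)

lemma ell_adj_le {Adj : Matrix V V ℕ} {k : ℕ} (hd : DiamAtMost Adj k) {x w : V} (u : V)
    (ha : Adj x w = 1) : ell Adj u w ≤ ell Adj u x + 1 :=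
  ell_le (step_extend (ell_pos_at hd u x) (by omega))

lemma Sd_zero {Adj : Matrix V V ℕ} {k : ℕ} (hd : DiamAtMost Adj k) (u : V) :
    Sd Adj u 0 = {u} := by
  ext v
  rw [mem_Sd, Finset.mem_singleton]
  constructor
  · intro h
    by_contra hne
    have hp := ell_pos_at hd u v
    rw [h, pow_zero, Matrix.one_apply_ne (fun hq => hne hq.symm)] at hp
    exact lt_irrefl 0 hp
  · rintro rfl; exact ell_self _

lemma deg_out {Adj : Matrix V V ℕ} {r z : ℕ} (hle : ∀ u v, Adj u v ≤ 1)
    (hreg : IsTotallyRegular Adj r z) (w : V) :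
    (Finset.univ.filter fun v => Adj w v = 1).card = r + z := by
  classical
  have h := Finset.card_filter_add_card_filter_not
    (s := Finset.univ.filter fun v => Adj w v = 1) (p := fun v => Adj v w = 1)
  rw [Finset.filter_filter, Finset.filter_filter] at h
  have h1 : (Finset.univ.filter fun v => Adj w v = 1 ∧ Adj v w = 1).card = r := (hreg w).1
  have h2 : (Finset.univ.filter fun a => Adj w a = 1 ∧ ¬ Adj a w = 1)
      = (Finset.univ.filter fun v => Adj w v = 1 ∧ Adj v w = 0) := by
    apply Finset.filter_congr
    intro v _
    have := hle v w
    constructor <;> intro hh <;> exact ⟨hh.1, by omega⟩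
  rw [h1, h2, (hreg w).2.1] at h
  omega

lemma parity {Adj : Matrix V V ℕ} (hle : ∀ u v, Adj u v ≤ 1) {c : V → Bool}
    (hc : ∀ u v : V, Adj u v ≠ 0 → c u ≠ c v) :
    ∀ (j : ℕ) (u v : V), 0 < (Adj ^ j) u v → (c u = c v ↔ j % 2 = 0) := by
  intro j
  induction j with
  | zero =>
    intro u v h
    rw [pow_zero] at h
    have huv : u = v := by
      by_contra hne
      rw [Matrix.one_apply_ne hne] at h
      exact lt_irrefl 0 h
    subst huv
    simp
  | succ n ih =>
    intro u v h
    obtain ⟨w, hw, ha⟩ := step_exists hle h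
    have hiw := ih u w hw
    have hwv : c w ≠ c v := hc w v (by omega)
    have hn : ((n+1) % 2 = 0) ↔ ¬ (n % 2 = 0) := by omega
    rw [hn, ← hiw]
    cases hcu : c u <;> cases hcw : c w <;> cases hcv : c v <;> simp_all

set_option linter.unusedSectionVars false

lemma S_rec {Adj : Matrix V V ℕ} {r z k : ℕ} (hrz : 1 ≤ r + z) (hle : ∀ u v, Adj u v ≤ 1)
    (hreg : IsTotallyRegular Adj r z) (hd : DiamAtMost Adj k) (u : V) (j : ℕ) :
    (Sd Adj u (j+2)).card ≤ (r + z - 1) * (Sd Adj u (j+1)).card + z * (Sd Adj u j).card := by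
  classical
  set S0 := Sd Adj u j with hS0
  set S1 := Sd Adj u (j+1) with hS1
  set S2 := Sd Adj u (j+2) with hS2
  -- every vertex of S2 has an in-neighbor in S1
  have hIn : ∀ v ∈ S2, ∃ w ∈ S1, Adj w v = 1 := by
    intro v hv
    have hv' : ell Adj u v = j + 2 := mem_Sd.1 hv
    have hp : 0 < (Adj ^ (j+2)) u v := by
      have := ell_pos_at hd u v; rwa [hv'] at this
    obtain ⟨w, hw, ha⟩ := step_exists hle hp
    have h1 : ell Adj u w ≤ j + 1 := ell_le hw
    have h2 : ell Adj u v ≤ ell Adj u w + 1 := ell_adj_le hd u ha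
    exact ⟨w, mem_Sd.2 (by omega), ha⟩
  -- counting via in-neighbors
  have hcard1 : S2.card ≤ ∑ w ∈ S1, (S2.filter fun v => Adj w v = 1).card := by
    have step1 : S2.card ≤ ∑ v ∈ S2, (S1.filter fun w => Adj w v = 1).card := by
      have : ∀ v ∈ S2, 1 ≤ (S1.filter fun w => Adj w v = 1).card := by
        intro v hv
        obtain ⟨w, hw, ha⟩ := hIn v hv
        exact Finset.card_pos.2 ⟨w, Finset.mem_filter.2 ⟨hw, ha⟩⟩
      calc S2.card = ∑ _v ∈ S2, 1 := by simp
        _ ≤ _ := Finset.sum_le_sum this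
    calc S2.card ≤ ∑ v ∈ S2, (S1.filter fun w => Adj w v = 1).card := step1
      _ = ∑ v ∈ S2, ∑ w ∈ S1, (if Adj w v = 1 then 1 else 0) := by
          refine Finset.sum_congr rfl fun v _ => ?_
          rw [Finset.card_filter]
      _ = ∑ w ∈ S1, ∑ v ∈ S2, (if Adj w v = 1 then 1 else 0) := Finset.sum_comm
      _ = ∑ w ∈ S1, (S2.filter fun v => Adj w v = 1).card := by
          refine Finset.sum_congr rfl fun w _ => ?_
          rw [Finset.card_filter]
  -- out-degree restriction
  have houtdeg : ∀ w ∈ S1, (S2.filter fun v => Adj w v = 1).card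
      ≤ (r + z) - (S0.filter fun x => Adj w x = 1).card := by
    intro w _
    have hsub0 : (S0.filter fun x => Adj w x = 1) ⊆ (Finset.univ.filter fun x => Adj w x = 1) := by
      intro x hx
      exact Finset.mem_filter.2 ⟨Finset.mem_univ x, (Finset.mem_filter.1 hx).2⟩
    have hsub2 : (S2.filter fun v => Adj w v = 1)
        ⊆ (Finset.univ.filter fun x => Adj w x = 1) \ (S0.filter fun x => Adj w x = 1) := by
      intro v hv
      obtain ⟨hv2, hav⟩ := Finset.mem_filter.1 hv
      refine Finset.mem_sdiff.2 ⟨Finset.mem_filter.2 ⟨Finset.mem_univ v, hav⟩, ?_⟩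
      intro hv0
      have e2 : ell Adj u v = j + 2 := mem_Sd.1 hv2
      have e0 : ell Adj u v = j := mem_Sd.1 (Finset.mem_filter.1 hv0).1
      omega
    calc (S2.filter fun v => Adj w v = 1).card
        ≤ ((Finset.univ.filter fun x => Adj w x = 1) \ (S0.filter fun x => Adj w x = 1)).card :=
          Finset.card_le_card hsub2
      _ = (r + z) - (S0.filter fun x => Adj w x = 1).card := by
          rw [Finset.card_sdiff_of_subset hsub0, deg_out hle hreg]
  -- the edge-reached / arc-reached split
  set E := S1.filter (fun w => ∃ x ∈ S0, Adj x w = 1 ∧ Adj w x = 1) with hE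
  have hEsub : E ⊆ S1 := Finset.filter_subset _ _
  have hEt : ∀ w ∈ E, 1 ≤ (S0.filter fun x => Adj w x = 1).card := by
    intro w hw
    obtain ⟨x, hx, hxw, hwx⟩ := (Finset.mem_filter.1 hw).2
    exact Finset.card_pos.2 ⟨x, Finset.mem_filter.2 ⟨hx, hwx⟩⟩
  have hZ : ∀ w ∈ S1 \ E, ∃ x ∈ S0, Adj x w = 1 ∧ Adj w x = 0 := by
    intro w hw
    obtain ⟨hw1, hwE⟩ := Finset.mem_sdiff.1 hw
    have hw' : ell Adj u w = j + 1 := mem_Sd.1 hw1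
    have hp : 0 < (Adj ^ (j+1)) u w := by
      have := ell_pos_at hd u w; rwa [hw'] at this
    obtain ⟨x, hx, ha⟩ := step_exists hle hp
    have h1 : ell Adj u x ≤ j := ell_le hx
    have h2 : ell Adj u w ≤ ell Adj u x + 1 := ell_adj_le hd u ha
    have hx0 : x ∈ S0 := mem_Sd.2 (by omega)
    have hwx : Adj w x = 0 := by
      have := hle w x
      by_contra hne
      exact hwE (Finset.mem_filter.2 ⟨hw1, ⟨x, hx0, ha, by omega⟩⟩)
    exact ⟨x, hx0, ha, hwx⟩
  have hZcard : (S1 \ E).card ≤ z * S0.card := by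
    have step1 : (S1 \ E).card ≤ ∑ w ∈ S1 \ E,
        (S0.filter fun x => Adj x w = 1 ∧ Adj w x = 0).card := by
      have : ∀ w ∈ S1 \ E, 1 ≤ (S0.filter fun x => Adj x w = 1 ∧ Adj w x = 0).card := by
        intro w hw
        obtain ⟨x, hx, h1, h2⟩ := hZ w hw
        exact Finset.card_pos.2 ⟨x, Finset.mem_filter.2 ⟨hx, h1, h2⟩⟩
      calc (S1 \ E).card = ∑ _w ∈ S1 \ E, 1 := by simp
        _ ≤ _ := Finset.sum_le_sum this
    have step2 : ∑ w ∈ S1 \ E, (S0.filter fun x => Adj x w = 1 ∧ Adj w x = 0).card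
        = ∑ x ∈ S0, ((S1 \ E).filter fun w => Adj x w = 1 ∧ Adj w x = 0).card := by
      calc ∑ w ∈ S1 \ E, (S0.filter fun x => Adj x w = 1 ∧ Adj w x = 0).card
          = ∑ w ∈ S1 \ E, ∑ x ∈ S0, (if Adj x w = 1 ∧ Adj w x = 0 then 1 else 0) := by
            refine Finset.sum_congr rfl fun w _ => ?_
            rw [Finset.card_filter]
        _ = ∑ x ∈ S0, ∑ w ∈ S1 \ E, (if Adj x w = 1 ∧ Adj w x = 0 then 1 else 0) :=
            Finset.sum_comm
        _ = _ := by
            refine Finset.sum_congr rfl fun x _ => ?_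
            rw [Finset.card_filter]
    have step3 : ∀ x ∈ S0, ((S1 \ E).filter fun w => Adj x w = 1 ∧ Adj w x = 0).card ≤ z := by
      intro x _
      have hsub : ((S1 \ E).filter fun w => Adj x w = 1 ∧ Adj w x = 0)
          ⊆ (Finset.univ.filter fun w => Adj x w = 1 ∧ Adj w x = 0) := by
        intro w hw
        exact Finset.mem_filter.2 ⟨Finset.mem_univ w, (Finset.mem_filter.1 hw).2⟩
      calc _ ≤ (Finset.univ.filter fun w => Adj x w = 1 ∧ Adj w x = 0).card :=
            Finset.card_le_card hsub
        _ = z := (hreg x).2.1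
    calc (S1 \ E).card ≤ ∑ x ∈ S0, ((S1 \ E).filter fun w => Adj x w = 1 ∧ Adj w x = 0).card := by
          rw [← step2]; exact step1
      _ ≤ ∑ _x ∈ S0, z := Finset.sum_le_sum step3
      _ = z * S0.card := by rw [Finset.sum_const, smul_eq_mul, mul_comm]
  -- combine
  have hsplit : ∑ w ∈ S1, ((r + z) - (S0.filter fun x => Adj w x = 1).card)
      = ∑ w ∈ S1 \ E, ((r + z) - (S0.filter fun x => Adj w x = 1).card)
        + ∑ w ∈ E, ((r + z) - (S0.filter fun x => Adj w x = 1).card) :=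
    (Finset.sum_sdiff hEsub).symm
  have hbE : ∑ w ∈ E, ((r + z) - (S0.filter fun x => Adj w x = 1).card)
      ≤ (r + z - 1) * E.card := by
    calc ∑ w ∈ E, ((r + z) - (S0.filter fun x => Adj w x = 1).card)
        ≤ ∑ _w ∈ E, (r + z - 1) := by
          refine Finset.sum_le_sum fun w hw => ?_
          have := hEt w hw
          omega
      _ = (r + z - 1) * E.card := by rw [Finset.sum_const, smul_eq_mul, mul_comm]
  have hbZ : ∑ w ∈ S1 \ E, ((r + z) - (S0.filter fun x => Adj w x = 1).card)
      ≤ (r + z) * (S1 \ E).card := by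
    calc ∑ w ∈ S1 \ E, ((r + z) - (S0.filter fun x => Adj w x = 1).card)
        ≤ ∑ _w ∈ S1 \ E, (r + z) := by
          refine Finset.sum_le_sum fun w _ => ?_
          omega
      _ = (r + z) * (S1 \ E).card := by rw [Finset.sum_const, smul_eq_mul, mul_comm]
  have hcards : (S1 \ E).card + E.card = S1.card := Finset.card_sdiff_add_card_eq_card hEsub
  calc S2.card ≤ ∑ w ∈ S1, (S2.filter fun v => Adj w v = 1).card := hcard1
    _ ≤ ∑ w ∈ S1, ((r + z) - (S0.filter fun x => Adj w x = 1).card) :=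
        Finset.sum_le_sum houtdeg
    _ = ∑ w ∈ S1 \ E, ((r + z) - (S0.filter fun x => Adj w x = 1).card)
        + ∑ w ∈ E, ((r + z) - (S0.filter fun x => Adj w x = 1).card) := hsplit
    _ ≤ (r + z) * (S1 \ E).card + (r + z - 1) * E.card := Nat.add_le_add hbZ hbE
    _ = (r + z - 1) * ((S1 \ E).card + E.card) + (S1 \ E).card := by
        obtain ⟨m, hm⟩ : ∃ m, r + z = m + 1 := ⟨r + z - 1, by omega⟩
        have h1 : r + z - 1 = m := by omega
        rw [h1, hm]
        ring
    _ ≤ (r + z - 1) * S1.card + z * S0.card := by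
        rw [hcards]
        exact Nat.add_le_add_left hZcard _

lemma W_rec {Adj : Matrix V V ℕ} {r z k : ℕ} (hrz : 1 ≤ r + z) (hle : ∀ u v, Adj u v ≤ 1)
    (hreg : IsTotallyRegular Adj r z) (hd : DiamAtMost Adj k) (u : V) (j : ℕ) :
    Wc Adj u (j+2) ≤ (r + z - 1) * Wc Adj u (j+1) + z * Wc Adj u j := by
  classical
  set S0 := Sd Adj u j with hS0
  set S1 := Sd Adj u (j+1) with hS1
  set S2 := Sd Adj u (j+2) with hS2
  set g : V → ℕ := fun w => (Adj ^ (j+1)) u w with hg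
  -- value of each entry as a sum over S1
  have hval : ∀ v ∈ S2, (Adj ^ (j+2)) u v = ∑ w ∈ S1, g w * Adj w v := by
    intro v hv
    have hv' : ell Adj u v = j + 2 := mem_Sd.1 hv
    rw [pow_apply_succ]
    refine (Finset.sum_subset (Finset.subset_univ S1) ?_).symm
    intro w _ hwS1
    by_contra hne
    have h1 : 0 < (Adj ^ (j+1)) u w := Nat.pos_of_ne_zero (by intro h0; simp [h0] at hne)
    have h2 : 0 < Adj w v := Nat.pos_of_ne_zero (by intro h0; simp [h0] at hne)
    have h3 : ell Adj u w ≤ j + 1 := ell_le h1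
    have h4 : ell Adj u v ≤ ell Adj u w + 1 := ell_adj_le hd u (by have := hle w v; omega)
    exact hwS1 (mem_Sd.2 (by omega))
  -- Wc (j+2) as weighted out-degree sum
  have hW2 : Wc Adj u (j+2) = ∑ w ∈ S1, g w * (S2.filter fun v => Adj w v = 1).card := by
    calc Wc Adj u (j+2) = ∑ v ∈ S2, (Adj ^ (j+2)) u v := rfl
      _ = ∑ v ∈ S2, ∑ w ∈ S1, g w * Adj w v := Finset.sum_congr rfl hval
      _ = ∑ w ∈ S1, ∑ v ∈ S2, g w * Adj w v := Finset.sum_comm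
      _ = ∑ w ∈ S1, g w * ∑ v ∈ S2, Adj w v := by
          refine Finset.sum_congr rfl fun w _ => ?_
          rw [Finset.mul_sum]
      _ = ∑ w ∈ S1, g w * (S2.filter fun v => Adj w v = 1).card := by
          refine Finset.sum_congr rfl fun w _ => ?_
          congr 1
          rw [Finset.card_filter]
          refine Finset.sum_congr rfl fun v _ => ?_
          have := hle w v
          split <;> omega
  -- out-degree restriction (same as in S_rec)
  have houtdeg : ∀ w ∈ S1, (S2.filter fun v => Adj w v = 1).card
      ≤ (r + z) - (S0.filter fun x => Adj w x = 1).card := by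
    intro w _
    have hsub0 : (S0.filter fun x => Adj w x = 1) ⊆ (Finset.univ.filter fun x => Adj w x = 1) := by
      intro x hx
      exact Finset.mem_filter.2 ⟨Finset.mem_univ x, (Finset.mem_filter.1 hx).2⟩
    have hsub2 : (S2.filter fun v => Adj w v = 1)
        ⊆ (Finset.univ.filter fun x => Adj w x = 1) \ (S0.filter fun x => Adj w x = 1) := by
      intro v hv
      obtain ⟨hv2, hav⟩ := Finset.mem_filter.1 hv
      refine Finset.mem_sdiff.2 ⟨Finset.mem_filter.2 ⟨Finset.mem_univ v, hav⟩, ?_⟩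
      intro hv0
      have e2 : ell Adj u v = j + 2 := mem_Sd.1 hv2
      have e0 : ell Adj u v = j := mem_Sd.1 (Finset.mem_filter.1 hv0).1
      omega
    calc (S2.filter fun v => Adj w v = 1).card
        ≤ ((Finset.univ.filter fun x => Adj w x = 1) \ (S0.filter fun x => Adj w x = 1)).card :=
          Finset.card_le_card hsub2
      _ = (r + z) - (S0.filter fun x => Adj w x = 1).card := by
          rw [Finset.card_sdiff_of_subset hsub0, deg_out hle hreg]
  set E := S1.filter (fun w => ∃ x ∈ S0, Adj x w = 1 ∧ Adj w x = 1) with hE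
  have hEsub : E ⊆ S1 := Finset.filter_subset _ _
  have hEt : ∀ w ∈ E, 1 ≤ (S0.filter fun x => Adj w x = 1).card := by
    intro w hw
    obtain ⟨x, hx, hxw, hwx⟩ := (Finset.mem_filter.1 hw).2
    exact Finset.card_pos.2 ⟨x, Finset.mem_filter.2 ⟨hx, hwx⟩⟩
  -- bound on the weight of arc-reached vertices
  have hZw : ∀ w ∈ S1 \ E, g w ≤ ∑ x ∈ S0, (Adj ^ j) u x *
      (if Adj x w = 1 ∧ Adj w x = 0 then 1 else 0) := by
    intro w hw
    obtain ⟨hw1, hwE⟩ := Finset.mem_sdiff.1 hw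
    have hgw : g w = ∑ x ∈ S0, (Adj ^ j) u x * Adj x w := by
      show (Adj ^ (j+1)) u w = _
      rw [pow_apply_succ]
      refine (Finset.sum_subset (Finset.subset_univ S0) ?_).symm
      intro x _ hxS0
      by_contra hne
      have h1 : 0 < (Adj ^ j) u x := Nat.pos_of_ne_zero (by intro h0; simp [h0] at hne)
      have h2 : 0 < Adj x w := Nat.pos_of_ne_zero (by intro h0; simp [h0] at hne)
      have h3 : ell Adj u x ≤ j := ell_le h1
      have h4 : ell Adj u w ≤ ell Adj u x + 1 := ell_adj_le hd u (by have := hle x w; omega)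
      have hw' : ell Adj u w = j + 1 := mem_Sd.1 hw1
      exact hxS0 (mem_Sd.2 (by omega))
    rw [hgw]
    refine Finset.sum_le_sum fun x hx => ?_
    have hx1 := hle x w
    rcases Nat.lt_or_ge (Adj x w) 1 with h0 | h1
    · have : Adj x w = 0 := by omega
      simp [this]
    · have hxw : Adj x w = 1 := by omega
      have hwx : Adj w x = 0 := by
        by_contra hne
        have := hle w x
        exact hwE (Finset.mem_filter.2 ⟨hw1, ⟨x, hx, hxw, by omega⟩⟩)
      simp [hxw, hwx]
  have hZsum : ∑ w ∈ S1 \ E, g w ≤ z * Wc Adj u j := by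
    calc ∑ w ∈ S1 \ E, g w
        ≤ ∑ w ∈ S1 \ E, ∑ x ∈ S0, (Adj ^ j) u x *
            (if Adj x w = 1 ∧ Adj w x = 0 then 1 else 0) := Finset.sum_le_sum hZw
      _ = ∑ x ∈ S0, ∑ w ∈ S1 \ E, (Adj ^ j) u x *
            (if Adj x w = 1 ∧ Adj w x = 0 then 1 else 0) := Finset.sum_comm
      _ = ∑ x ∈ S0, (Adj ^ j) u x * ((S1 \ E).filter fun w => Adj x w = 1 ∧ Adj w x = 0).card := by
          refine Finset.sum_congr rfl fun x _ => ?_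
          rw [← Finset.mul_sum, Finset.card_filter]
      _ ≤ ∑ x ∈ S0, (Adj ^ j) u x * z := by
          refine Finset.sum_le_sum fun x _ => ?_
          refine Nat.mul_le_mul_left _ ?_
          have hsub : ((S1 \ E).filter fun w => Adj x w = 1 ∧ Adj w x = 0)
              ⊆ (Finset.univ.filter fun w => Adj x w = 1 ∧ Adj w x = 0) := by
            intro w hw
            exact Finset.mem_filter.2 ⟨Finset.mem_univ w, (Finset.mem_filter.1 hw).2⟩
          calc _ ≤ (Finset.univ.filter fun w => Adj x w = 1 ∧ Adj w x = 0).card :=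
                Finset.card_le_card hsub
            _ = z := (hreg x).2.1
      _ = z * Wc Adj u j := by
          rw [← Finset.sum_mul]
          rw [mul_comm]
          rfl
  -- combine
  have hsplit : ∀ f : V → ℕ, ∑ w ∈ S1, f w = ∑ w ∈ S1 \ E, f w + ∑ w ∈ E, f w :=
    fun f => (Finset.sum_sdiff hEsub).symm
  have hbE : ∑ w ∈ E, g w * ((r + z) - (S0.filter fun x => Adj w x = 1).card)
      ≤ (r + z - 1) * ∑ w ∈ E, g w := by
    rw [Finset.mul_sum]
    refine Finset.sum_le_sum fun w hw => ?_
    have := hEt w hw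
    have hb : (r + z) - (S0.filter fun x => Adj w x = 1).card ≤ r + z - 1 := by omega
    calc g w * ((r + z) - (S0.filter fun x => Adj w x = 1).card) ≤ g w * (r + z - 1) :=
          Nat.mul_le_mul_left _ hb
      _ = (r + z - 1) * g w := mul_comm _ _
  have hbZ : ∑ w ∈ S1 \ E, g w * ((r + z) - (S0.filter fun x => Adj w x = 1).card)
      ≤ (r + z) * ∑ w ∈ S1 \ E, g w := by
    rw [Finset.mul_sum]
    refine Finset.sum_le_sum fun w _ => ?_
    calc g w * ((r + z) - (S0.filter fun x => Adj w x = 1).card) ≤ g w * (r + z) :=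
          Nat.mul_le_mul_left _ (by omega)
      _ = (r + z) * g w := mul_comm _ _
  have hWsum : ∑ w ∈ S1 \ E, g w + ∑ w ∈ E, g w = Wc Adj u (j+1) :=
    (hsplit g).symm
  calc Wc Adj u (j+2) = ∑ w ∈ S1, g w * (S2.filter fun v => Adj w v = 1).card := hW2
    _ ≤ ∑ w ∈ S1, g w * ((r + z) - (S0.filter fun x => Adj w x = 1).card) :=
        Finset.sum_le_sum fun w hw => Nat.mul_le_mul_left _ (houtdeg w hw)
    _ = ∑ w ∈ S1 \ E, g w * ((r + z) - (S0.filter fun x => Adj w x = 1).card)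
        + ∑ w ∈ E, g w * ((r + z) - (S0.filter fun x => Adj w x = 1).card) := hsplit _
    _ ≤ (r + z) * ∑ w ∈ S1 \ E, g w + (r + z - 1) * ∑ w ∈ E, g w := Nat.add_le_add hbZ hbE
    _ = (r + z - 1) * (∑ w ∈ S1 \ E, g w + ∑ w ∈ E, g w) + ∑ w ∈ S1 \ E, g w := by
        obtain ⟨m, hm⟩ : ∃ m, r + z = m + 1 := ⟨r + z - 1, by omega⟩
        have h1 : r + z - 1 = m := by omega
        rw [h1, hm]
        ring
    _ ≤ (r + z - 1) * Wc Adj u (j+1) + z * Wc Adj u j := by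
        rw [hWsum]
        exact Nat.add_le_add_left hZsum _

lemma Wc_zero {Adj : Matrix V V ℕ} {k : ℕ} (hd : DiamAtMost Adj k) (u : V) :
    Wc Adj u 0 = 1 := by
  show ∑ v ∈ Sd Adj u 0, (Adj ^ 0) u v = 1
  rw [Sd_zero hd u, Finset.sum_singleton, pow_zero, Matrix.one_apply_eq]

lemma Wc_one {Adj : Matrix V V ℕ} {r z k : ℕ} (hle : ∀ u v, Adj u v ≤ 1)
    (hreg : IsTotallyRegular Adj r z) (hd : DiamAtMost Adj k) (u : V) :
    Wc Adj u 1 ≤ r + z := by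
  classical
  have hsub : Sd Adj u 1 ⊆ Finset.univ.filter fun v => Adj u v = 1 := by
    intro v hv
    have h1 : ell Adj u v = 1 := mem_Sd.1 hv
    have h2 : 0 < (Adj ^ 1) u v := by
      have := ell_pos_at hd u v; rwa [h1] at this
    rw [pow_one] at h2
    have := hle u v
    exact Finset.mem_filter.2 ⟨Finset.mem_univ v, by omega⟩
  calc Wc Adj u 1 = ∑ v ∈ Sd Adj u 1, (Adj ^ 1) u v := rfl
    _ ≤ ∑ v ∈ Finset.univ.filter fun v => Adj u v = 1, (Adj ^ 1) u v :=
        Finset.sum_le_sum_of_subset hsub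
    _ = ∑ v ∈ Finset.univ.filter fun v => Adj u v = 1, 1 := by
        refine Finset.sum_congr rfl fun v hv => ?_
        rw [pow_one]
        exact (Finset.mem_filter.1 hv).2
    _ = r + z := by rw [Finset.sum_const, smul_eq_mul, mul_one, deg_out hle hreg]

lemma card_le_Wc {Adj : Matrix V V ℕ} {k : ℕ} (hd : DiamAtMost Adj k) (u : V) (j : ℕ) :
    (Sd Adj u j).card ≤ Wc Adj u j := by
  calc (Sd Adj u j).card = ∑ _v ∈ Sd Adj u j, 1 := by simp
    _ ≤ ∑ v ∈ Sd Adj u j, (Adj ^ j) u v := by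
        refine Finset.sum_le_sum fun v hv => ?_
        have h1 : ell Adj u v = j := mem_Sd.1 hv
        have h2 := ell_pos_at hd u v
        rw [h1] at h2
        omega
    _ = Wc Adj u j := rfl

lemma Wc_le_N {Adj : Matrix V V ℕ} {r z k : ℕ} (hrz : 1 ≤ r + z) (hle : ∀ u v, Adj u v ≤ 1)
    (hreg : IsTotallyRegular Adj r z) (hd : DiamAtMost Adj k) (u : V) :
    ∀ j, Wc Adj u j ≤ Nrec r z j := by
  intro j
  induction j using Nat.twoStepInduction with
  | zero => rw [Wc_zero hd u]; exact le_refl _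
  | one => exact Wc_one hle hreg hd u
  | more n ih2 ih1 =>
    calc Wc Adj u (n+2) ≤ (r + z - 1) * Wc Adj u (n+1) + z * Wc Adj u n :=
          W_rec hrz hle hreg hd u n
      _ ≤ (r + z - 1) * Nrec r z (n+1) + z * Nrec r z n :=
          Nat.add_le_add (Nat.mul_le_mul_left _ ih1) (Nat.mul_le_mul_left _ ih2)
      _ = Nrec r z (n+2) := rfl

lemma fiber_card {Adj : Matrix V V ℕ} {k : ℕ} (hd : DiamAtMost Adj k) (hk : 1 ≤ k) (u : V) :
    (Finset.univ.filter fun v => ell Adj u v % 2 = (k-1) % 2).card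
      = ∑ j ∈ (Finset.range k).filter (fun j => j % 2 = (k-1) % 2), (Sd Adj u j).card := by
  classical
  rw [Finset.card_eq_sum_card_fiberwise
    (f := ell Adj u) (t := (Finset.range k).filter (fun j => j % 2 = (k-1) % 2)) ?_]
  · refine Finset.sum_congr rfl fun j hj => ?_
    have hj2 := (Finset.mem_filter.1 hj).2
    congr 1
    ext v
    simp only [Finset.mem_filter, Finset.mem_univ, true_and, mem_Sd]
    constructor
    · exact fun h => h.2
    · exact fun h => ⟨by omega, h⟩
  · intro v hv
    have h1 : ell Adj u v % 2 = (k-1) % 2 := (Finset.mem_filter.1 hv).2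
    have h2 : ell Adj u v ≤ k := ell_le_k hd u v
    refine Finset.mem_filter.2 ⟨Finset.mem_range.2 ?_, h1⟩
    omega

lemma main_count {Adj : Matrix V V ℕ} {r z k : ℕ} [Nonempty V]
    (hr : 1 ≤ r) (hz : 1 ≤ z) (hk : 2 ≤ k)
    (hle : ∀ u v, Adj u v ≤ 1)
    (hreg : IsTotallyRegular Adj r z)
    {c : V → Bool} (hc : ∀ u v : V, Adj u v ≠ 0 → c u ≠ c v)
    (hd : DiamAtMost Adj k)
    (hcardV : Fintype.card V
      = 2 * ∑ j ∈ (Finset.range k).filter (fun j => j % 2 = (k-1) % 2), Nrec r z j) :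
    ∀ (u : V) (j : ℕ), j < k → ∀ v ∈ Sd Adj u j, (Adj ^ j) u v = 1 := by
  classical
  set T := ∑ j ∈ (Finset.range k).filter (fun j => j % 2 = (k-1) % 2), Nrec r z j with hT
  have hk1 : 1 ≤ k := by omega
  have hrz : 1 ≤ r + z := by omega
  have hSleN : ∀ (u : V) (j : ℕ), (Sd Adj u j).card ≤ Nrec r z j :=
    fun u j => le_trans (card_le_Wc hd u j) (Wc_le_N hrz hle hreg hd u j)
  have hTle : ∀ u : V,
      (Finset.univ.filter fun v => ell Adj u v % 2 = (k-1) % 2).card ≤ T := by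
    intro u
    rw [fiber_card hd hk1 u]
    exact Finset.sum_le_sum fun j _ => hSleN u j
  have hside : ∀ u : V, (Finset.univ.filter fun v => ell Adj u v % 2 = (k-1) % 2)
      = (Finset.univ.filter fun v => c v = (if (k-1) % 2 = 0 then c u else !(c u))) := by
    intro u
    ext v
    simp only [Finset.mem_filter, Finset.mem_univ, true_and]
    have hpar := parity hle hc (ell Adj u v) u v (ell_pos_at hd u v)
    rcases Nat.mod_two_eq_zero_or_one (k-1) with hp | hp <;> rw [hp]
    · rw [if_pos rfl, ← hpar]
      exact ⟨fun h => h.symm, fun h => h.symm⟩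
    · rw [if_neg (by omega)]
      have h2 : ell Adj u v % 2 = 1 ↔ ¬ (ell Adj u v % 2 = 0) := by omega
      rw [h2, ← hpar]
      cases hcu : c u <;> cases hcv : c v <;> simp
  have hcolor : ∀ b : Bool, ∃ u : V, c u = b := by
    obtain ⟨u0⟩ := ‹Nonempty V›
    have hedge : 0 < (Finset.univ.filter fun v => Adj u0 v = 1 ∧ Adj v u0 = 1).card := by
      rw [(hreg u0).1]; omega
    obtain ⟨w, hw⟩ := Finset.card_pos.1 hedge
    have haw : Adj u0 w = 1 := (Finset.mem_filter.1 hw).2.1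
    have hne : c u0 ≠ c w := hc u0 w (by omega)
    intro b
    by_cases hb : c u0 = b
    · exact ⟨u0, hb⟩
    · exact ⟨w, by cases hcu : c u0 <;> cases hcw : c w <;> cases b <;> simp_all⟩
  have hsplitV : (Finset.univ.filter fun v => c v = true).card
      + (Finset.univ.filter fun v => c v = false).card = Fintype.card V := by
    have h := Finset.card_filter_add_card_filter_not
      (s := (Finset.univ : Finset V)) (p := fun v => c v = true)
    rw [Finset.card_univ] at h
    have h2 : (Finset.univ.filter fun a => ¬ c a = true) = (Finset.univ.filter fun v => c v = false) := by
      apply Finset.filter_congr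
      intro v _
      cases c v <;> simp
    rw [h2] at h
    exact h
  have hsideT : ∀ b : Bool, (Finset.univ.filter fun v => c v = b).card ≤ T := by
    intro b
    obtain ⟨u, hu⟩ := hcolor (if (k-1) % 2 = 0 then b else !b)
    have h1 := hTle u
    rw [hside u] at h1
    have hcu : (if (k-1) % 2 = 0 then c u else !(c u)) = b := by
      rcases Nat.mod_two_eq_zero_or_one (k-1) with hp | hp <;>
        simp only [hp, Nat.one_ne_zero, ite_true, ite_false, if_true, if_false] at hu ⊢ <;>
        simp [hu]
    rwa [hcu] at h1
  have hTeq : ∀ b : Bool, (Finset.univ.filter fun v => c v = b).card = T := by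
    intro b
    have h1 := hsideT true
    have h2 := hsideT false
    cases b <;> omega
  intro u
  have hfil : (Finset.univ.filter fun v => ell Adj u v % 2 = (k-1) % 2).card = T := by
    rw [hside u]
    exact hTeq _
  have hlev : ∀ j ∈ (Finset.range k).filter (fun j => j % 2 = (k-1) % 2),
      (Sd Adj u j).card = Nrec r z j := by
    have hsum : ∑ j ∈ (Finset.range k).filter (fun j => j % 2 = (k-1) % 2), (Sd Adj u j).card
        = ∑ j ∈ (Finset.range k).filter (fun j => j % 2 = (k-1) % 2), Nrec r z j := by
      rw [← fiber_card hd hk1 u, hfil]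
    exact (Finset.sum_eq_sum_iff_of_le (fun i _ => hSleN u i)).1 hsum
  have hall : ∀ j, j < k → (Sd Adj u j).card = Nrec r z j := by
    intro j hj
    by_cases hp : j % 2 = (k-1) % 2
    · exact hlev j (Finset.mem_filter.2 ⟨Finset.mem_range.2 hj, hp⟩)
    · rcases Nat.eq_zero_or_pos j with rfl | hj1
      · rw [Sd_zero hd u]
        rfl
      · obtain ⟨i, rfl⟩ : ∃ i, j = i + 1 := ⟨j - 1, by omega⟩
        have hj2 : i + 2 < k := by omega
        have hp2 : (i + 2) % 2 = (k-1) % 2 := by omega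
        have h1 : (Sd Adj u (i+2)).card = Nrec r z (i+2) :=
          hlev _ (Finset.mem_filter.2 ⟨Finset.mem_range.2 hj2, hp2⟩)
        have h2 := S_rec hrz hle hreg hd u i
        have h3 : (Sd Adj u i).card ≤ Nrec r z i := hSleN u i
        have h4 : (Sd Adj u (i+1)).card ≤ Nrec r z (i+1) := hSleN u (i+1)
        have h5 : Nrec r z (i+2) = (r + z - 1) * Nrec r z (i+1) + z * Nrec r z i := rfl
        have hineq : (r + z - 1) * Nrec r z (i+1) + z * Nrec r z i
            ≤ (r + z - 1) * (Sd Adj u (i+1)).card + z * Nrec r z i := by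
          calc (r + z - 1) * Nrec r z (i+1) + z * Nrec r z i
              = (Sd Adj u (i+2)).card := by rw [← h5, ← h1]
            _ ≤ (r + z - 1) * (Sd Adj u (i+1)).card + z * (Sd Adj u i).card := h2
            _ ≤ (r + z - 1) * (Sd Adj u (i+1)).card + z * Nrec r z i :=
                Nat.add_le_add_left (Nat.mul_le_mul_left _ h3) _
        have h7 : Nrec r z (i+1) ≤ (Sd Adj u (i+1)).card := by
          have h8 := Nat.le_of_add_le_add_right hineq
          exact Nat.le_of_mul_le_mul_left h8 (by omega)
        exact le_antisymm h4 h7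
  intro j hj v hv
  have hWeq : Wc Adj u j = (Sd Adj u j).card := by
    refine le_antisymm ?_ (card_le_Wc hd u j)
    rw [hall j hj]
    exact Wc_le_N hrz hle hreg hd u j
  have hsum1 : ∑ x ∈ Sd Adj u j, (1:ℕ) = ∑ x ∈ Sd Adj u j, (Adj ^ j) u x := by
    rw [Finset.sum_const, smul_eq_mul, mul_one]
    exact hWeq.symm
  have hone : ∀ x ∈ Sd Adj u j, (1:ℕ) ≤ (Adj ^ j) u x := by
    intro x hx
    have h1 : ell Adj u x = j := mem_Sd.1 hx
    have h2 := ell_pos_at hd u x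
    rw [h1] at h2
    omega
  have := (Finset.sum_eq_sum_iff_of_le hone).1 hsum1 v hv
  omega

end MB

theorem stmt_16 {V : Type*} [Fintype V] [DecidableEq V] [Nonempty V]
    (r z k : ℕ) (hr : 1 ≤ r) (hz : 1 ≤ z) (hk : 2 ≤ k)
    (Adj : Matrix V V ℕ)
    (hmixed : IsMixedGraph Adj)
    (hreg : IsTotallyRegular Adj r z)
    (hbip : IsBipartiteMixed Adj)
    (hdiam : DiamExactly Adj k)
    (hcard : (Fintype.card V : ℝ) = mooreBoundBip r z k) :
    ∀ (u v : V) (j : ℕ), j < k → 0 < (Adj ^ j) u v →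
      (∀ i : ℕ, i < j → ¬ 0 < (Adj ^ i) u v) → (Adj ^ j) u v = 1 := by
    classical
  obtain ⟨hle, hdiag⟩ := hmixed
  obtain ⟨c, hc⟩ := hbip
  have hd : DiamAtMost Adj k := hdiam.1
  have hkk : 1 ≤ k := by omega
  have hmoore := MB.moore_eq_sum hr hz k hkk
  have hcast : ((Fintype.card V : ℕ) : ℝ)
      = ((2 * ∑ j ∈ (Finset.range k).filter (fun j => j % 2 = (k-1) % 2), Nrec r z j : ℕ) : ℝ) := by
    rw [hcard, hmoore]
    push_cast
    ring
  have hcardV : Fintype.card V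
      = 2 * ∑ j ∈ (Finset.range k).filter (fun j => j % 2 = (k-1) % 2), Nrec r z j :=
    Nat.cast_injective hcast
  intro u v j hj hpos hmin
  have hellv : MB.ell Adj u v = j := by
    have h1 : MB.ell Adj u v ≤ j := MB.ell_le hpos
    rcases Nat.lt_or_ge (MB.ell Adj u v) j with h2 | h2
    · exact absurd (MB.ell_pos_at hd u v) (hmin _ h2)
    · omega
  exact MB.main_count hr hz hk hle hreg hc hd hcardV u j hj v (MB.mem_Sd.2 hellv)
end

section
/- For every prime power q, setting d = q + 1, there exists a bipartite mixed graph on a finite vertex set V that is totally regular with degrees (1, q), has diameter exactly 4, and has card V = 2(q+1)(q² + q + 1) = 2d·((d−1)³ − 1)/(d−2) vertices. -/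
open Configuration Configuration.ProjectivePlane

namespace MixedAux

variable {P L : Type*} [Membership P L]

abbrev Vtx (P L : Type*) [Membership P L] := Bool × {x : L × P // x.2 ∈ x.1}

def Rel (u v : Vtx P L) : Prop :=
  v.1 = !u.1 ∧ (if u.1 then v.2.1.1 = u.2.1.1 else v.2.1.2 = u.2.1.2)

open scoped Classical in
noncomputable def adjM (P L : Type*) [Membership P L] : Matrix (Vtx P L) (Vtx P L) ℕ :=
  fun u v => if Rel u v then 1 else 0

lemma adjM_eq_one_iff {u v : Vtx P L} : adjM P L u v = 1 ↔ Rel u v := by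
  unfold adjM; split <;> simp_all

lemma adjM_eq_zero_iff {u v : Vtx P L} : adjM P L u v = 0 ↔ ¬ Rel u v := by
  unfold adjM; split <;> simp_all

lemma adjM_ne_zero_iff {u v : Vtx P L} : adjM P L u v ≠ 0 ↔ Rel u v := by
  unfold adjM; split <;> simp_all

lemma adjM_pos_iff {u v : Vtx P L} : 0 < adjM P L u v ↔ Rel u v := by
  rw [Nat.pos_iff_ne_zero, adjM_ne_zero_iff]


lemma adjM_le_one (u v : Vtx P L) : adjM P L u v ≤ 1 := by
  unfold adjM; split <;> simp

lemma isMixedGraph : IsMixedGraph (adjM P L) := by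
  refine ⟨adjM_le_one, fun u => ?_⟩
  rw [adjM_eq_zero_iff, Rel]
  rintro ⟨h, -⟩
  simp at h

lemma isBipartiteMixed : IsBipartiteMixed (adjM P L) := by
  refine ⟨Prod.fst, fun u v h => ?_⟩
  rw [adjM_ne_zero_iff] at h
  have := h.1
  cases hu : u.1 <;> simp_all

variable [Fintype P] [Fintype L] [ProjectivePlane P L]

open scoped Classical

lemma card_filter_lines (p : P) (l : L) (hl : p ∈ l) :
    (Finset.univ.filter fun m : L => p ∈ m ∧ m ≠ l).card = order P L := by
  have h1 : (Finset.univ.filter fun m : L => p ∈ m ∧ m ≠ l)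
      = (Finset.univ.filter fun m : L => p ∈ m).erase l := by
    ext m
    simp only [Finset.mem_filter, Finset.mem_univ, true_and, Finset.mem_erase]
    tauto
  rw [h1, Finset.card_erase_of_mem (by simp [hl])]
  have h2 : (Finset.univ.filter fun m : L => p ∈ m).card = lineCount L p := by
    rw [lineCount, Nat.card_eq_fintype_card, Fintype.card_subtype]
  rw [h2, lineCount_eq]
  simp

lemma card_filter_points (p : P) (l : L) (hl : p ∈ l) :
    (Finset.univ.filter fun x : P => x ∈ l ∧ x ≠ p).card = order P L := by
  have h1 : (Finset.univ.filter fun x : P => x ∈ l ∧ x ≠ p)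
      = (Finset.univ.filter fun x : P => x ∈ l).erase p := by
    ext m
    simp only [Finset.mem_filter, Finset.mem_univ, true_and, Finset.mem_erase]
    tauto
  rw [h1, Finset.card_erase_of_mem (by simp [hl])]
  have h2 : (Finset.univ.filter fun x : P => x ∈ l).card = pointCount P l := by
    rw [pointCount, Nat.card_eq_fintype_card, Fintype.card_subtype]
  rw [h2, pointCount_eq]
  simp

lemma isTotallyRegular : IsTotallyRegular (adjM P L) 1 (order P L) := by
  rintro ⟨ε, ⟨⟨l, p⟩, hlp⟩⟩
  refine ⟨?_, ?_, ?_⟩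
  · -- edges: singleton
    have e1 : (Finset.univ.filter fun v : Vtx P L =>
        adjM P L (ε, ⟨(l, p), hlp⟩) v = 1 ∧ adjM P L v (ε, ⟨(l, p), hlp⟩) = 1)
        = {(!ε, ⟨(l, p), hlp⟩)} := by
      ext ⟨ε', ⟨⟨m, x⟩, hmx⟩⟩
      simp only [Finset.mem_filter, Finset.mem_univ, true_and, adjM_eq_one_iff, Rel,
        Finset.mem_singleton, Prod.mk.injEq, Subtype.mk.injEq]
      cases ε <;> cases ε' <;> simp_all <;> aesop
    rw [e1, Finset.card_singleton]
  · -- out arcs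
    cases ε
    · -- head is the point p : out-neighbors (true, (m, p)) with m ≠ l
      rw [← card_filter_lines p l hlp]
      refine Finset.card_bij' (fun v _ => v.2.1.1)
        (fun m hm => (true, ⟨(m, p), (Finset.mem_filter.mp hm).2.1⟩)) ?_ ?_ ?_ ?_
      · rintro ⟨ε', ⟨⟨m, x⟩, hmx⟩⟩ hv
        simp only [Finset.mem_filter, Finset.mem_univ, true_and, adjM_eq_one_iff,
          adjM_eq_zero_iff, Rel] at hv ⊢
        cases ε' <;> simp_all
        exact fun h => hv.2 h.symm
      · intro m hm
        simp only [Finset.mem_filter, Finset.mem_univ, true_and] at hm ⊢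
        simp only [adjM_eq_one_iff, adjM_eq_zero_iff, Rel]
        simp [hm.2.symm]
      · rintro ⟨ε', ⟨⟨m, x⟩, hmx⟩⟩ hv
        simp only [Finset.mem_filter, Finset.mem_univ, true_and, adjM_eq_one_iff,
          adjM_eq_zero_iff, Rel] at hv
        cases ε' <;> simp_all
      · intro m hm
        rfl
    · -- head is the line l : out-neighbors (false, (l, x)) with x ≠ p
      rw [← card_filter_points p l hlp]
      refine Finset.card_bij' (fun v _ => v.2.1.2)
        (fun x hx => (false, ⟨(l, x), (Finset.mem_filter.mp hx).2.1⟩)) ?_ ?_ ?_ ?_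
      · rintro ⟨ε', ⟨⟨m, x⟩, hmx⟩⟩ hv
        simp only [Finset.mem_filter, Finset.mem_univ, true_and, adjM_eq_one_iff,
          adjM_eq_zero_iff, Rel] at hv ⊢
        cases ε' <;> simp_all
        exact fun h => hv.2 h.symm
      · intro x hx
        simp only [Finset.mem_filter, Finset.mem_univ, true_and] at hx ⊢
        simp only [adjM_eq_one_iff, adjM_eq_zero_iff, Rel]
        simp [hx.2.symm]
      · rintro ⟨ε', ⟨⟨m, x⟩, hmx⟩⟩ hv
        simp only [Finset.mem_filter, Finset.mem_univ, true_and, adjM_eq_one_iff,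
          adjM_eq_zero_iff, Rel] at hv
        cases ε' <;> simp_all
      · intro x hx
        rfl
  · -- in arcs
    cases ε
    · -- in-neighbors of (false,(l,p)) : (true, (l, x)) with x ≠ p
      rw [← card_filter_points p l hlp]
      refine Finset.card_bij' (fun v _ => v.2.1.2)
        (fun x hx => (true, ⟨(l, x), (Finset.mem_filter.mp hx).2.1⟩)) ?_ ?_ ?_ ?_
      · rintro ⟨ε', ⟨⟨m, x⟩, hmx⟩⟩ hv
        simp only [Finset.mem_filter, Finset.mem_univ, true_and, adjM_eq_one_iff,
          adjM_eq_zero_iff, Rel] at hv ⊢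
        cases ε' <;> simp_all
      · intro x hx
        simp only [Finset.mem_filter, Finset.mem_univ, true_and] at hx ⊢
        simp only [adjM_eq_one_iff, adjM_eq_zero_iff, Rel]
        simp [hx.2]
      · rintro ⟨ε', ⟨⟨m, x⟩, hmx⟩⟩ hv
        simp only [Finset.mem_filter, Finset.mem_univ, true_and, adjM_eq_one_iff,
          adjM_eq_zero_iff, Rel] at hv
        cases ε' <;> simp_all
      · intro x hx
        rfl
    · -- in-neighbors of (true,(l,p)) : (false, (m, p)) with m ≠ l
      rw [← card_filter_lines p l hlp]
      refine Finset.card_bij' (fun v _ => v.2.1.1)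
        (fun m hm => (false, ⟨(m, p), (Finset.mem_filter.mp hm).2.1⟩)) ?_ ?_ ?_ ?_
      · rintro ⟨ε', ⟨⟨m, x⟩, hmx⟩⟩ hv
        simp only [Finset.mem_filter, Finset.mem_univ, true_and, adjM_eq_one_iff,
          adjM_eq_zero_iff, Rel] at hv ⊢
        cases ε' <;> simp_all
      · intro m hm
        simp only [Finset.mem_filter, Finset.mem_univ, true_and] at hm ⊢
        simp only [adjM_eq_one_iff, adjM_eq_zero_iff, Rel]
        simp [hm.2]
      · rintro ⟨ε', ⟨⟨m, x⟩, hmx⟩⟩ hv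
        simp only [Finset.mem_filter, Finset.mem_univ, true_and, adjM_eq_one_iff,
          adjM_eq_zero_iff, Rel] at hv
        cases ε' <;> simp_all
      · intro m hm
        rfl

lemma pow_step {V : Type*} [Fintype V] [DecidableEq V] (A : Matrix V V ℕ) {i : ℕ} {u w v : V}
    (h1 : 0 < (A ^ i) u w) (h2 : 0 < A w v) : 0 < (A ^ (i + 1)) u v := by
  rw [pow_succ]
  have : (A ^ i) u w * A w v ≤ ((A ^ i) * A) u v := by
    rw [Matrix.mul_apply]
    exact Finset.single_le_sum (f := fun x => (A ^ i) u x * A x v)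
      (fun _ _ => Nat.zero_le _) (Finset.mem_univ w)
  exact lt_of_lt_of_le (Nat.mul_pos h1 h2) this

lemma sum_pos_of_pow {V : Type*} [Fintype V] [DecidableEq V] (A : Matrix V V ℕ) {n i : ℕ}
    {u v : V} (hi : i ∈ Finset.range n) (h : 0 < (A ^ i) u v) :
    0 < (∑ j ∈ Finset.range n, A ^ j) u v := by
  rw [Matrix.sum_apply]
  exact lt_of_lt_of_le h (Finset.single_le_sum (f := fun j => (A ^ j) u v) (fun _ _ => Nat.zero_le _) hi)

lemma adjM_pow_one_pos {u v : Vtx P L} (h : Rel u v) : 0 < (adjM P L ^ 1) u v := by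
  rw [pow_one, adjM_pos_iff]; exact h

lemma nonempty_points (l : L) : Nonempty {x : P // x ∈ l} := by
  have h := pointCount_eq P l
  rw [pointCount] at h
  have : 0 < Nat.card {x : P // x ∈ l} := by omega
  exact (Nat.card_pos_iff.mp this).1

lemma nonempty_lines (p : P) : Nonempty {m : L // p ∈ m} := by
  have h := lineCount_eq L p
  rw [lineCount] at h
  have : 0 < Nat.card {m : L // p ∈ m} := by omega
  exact (Nat.card_pos_iff.mp this).1

lemma diamAtMost : DiamAtMost (adjM P L) 4 := by
  have key : ∀ u v : Vtx P L, ∃ i, i ∈ Finset.range 5 ∧ 0 < (adjM P L ^ i) u v := by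
    rintro ⟨ε, ⟨⟨l, p⟩, hlp⟩⟩ ⟨ε', ⟨⟨l', p'⟩, hl'p'⟩⟩
    by_cases huv : ((ε, ⟨(l, p), hlp⟩) : Vtx P L) = (ε', ⟨(l', p'), hl'p'⟩)
    · exact ⟨0, by simp, by rw [pow_zero, huv]; simp [Matrix.one_apply_eq]⟩
    cases ε <;> cases ε'
    · -- false false : head p, tail l'
      by_cases hp : p ∈ l'
      · refine ⟨2, by simp, ?_⟩
        have r1 : Rel ((false, ⟨(l, p), hlp⟩) : Vtx P L) (true, ⟨(l', p), hp⟩) :=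
          ⟨by simp, by simp⟩
        have r2 : Rel ((true, ⟨(l', p), hp⟩) : Vtx P L) (false, ⟨(l', p'), hl'p'⟩) :=
          ⟨by simp, by simp⟩
        exact pow_step _ (adjM_pow_one_pos r1) (adjM_pos_iff.mpr r2)
      · obtain ⟨⟨m, hm⟩⟩ := nonempty_points (P := P) l'
        have hpm : p ≠ m := fun h => hp (h ▸ hm)
        have h1 := (HasLines.mkLine_ax (L := L) hpm).1
        have h2 := (HasLines.mkLine_ax (L := L) hpm).2
        refine ⟨4, by simp, ?_⟩
        have r1 : Rel ((false, ⟨(l, p), hlp⟩) : Vtx P L)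
            (true, ⟨(HasLines.mkLine (L := L) hpm, p), h1⟩) := ⟨by simp, by simp⟩
        have r2 : Rel ((true, ⟨(HasLines.mkLine (L := L) hpm, p), h1⟩) : Vtx P L)
            (false, ⟨(HasLines.mkLine (L := L) hpm, m), h2⟩) := ⟨by simp, by simp⟩
        have r3 : Rel ((false, ⟨(HasLines.mkLine (L := L) hpm, m), h2⟩) : Vtx P L)
            (true, ⟨(l', m), hm⟩) := ⟨by simp, by simp⟩
        have r4 : Rel ((true, ⟨(l', m), hm⟩) : Vtx P L) (false, ⟨(l', p'), hl'p'⟩) :=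
          ⟨by simp, by simp⟩
        exact pow_step _ (pow_step _ (pow_step _ (adjM_pow_one_pos r1)
          (adjM_pos_iff.mpr r2)) (adjM_pos_iff.mpr r3)) (adjM_pos_iff.mpr r4)
    · -- false true : head p, tail p'
      by_cases hpp : p = p'
      · exact ⟨1, by simp, adjM_pow_one_pos ⟨by simp, by simp [hpp]⟩⟩
      · have h1 := (HasLines.mkLine_ax (L := L) hpp).1
        have h2 := (HasLines.mkLine_ax (L := L) hpp).2
        refine ⟨3, by simp, ?_⟩
        have r1 : Rel ((false, ⟨(l, p), hlp⟩) : Vtx P L)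
            (true, ⟨(HasLines.mkLine (L := L) hpp, p), h1⟩) := ⟨by simp, by simp⟩
        have r2 : Rel ((true, ⟨(HasLines.mkLine (L := L) hpp, p), h1⟩) : Vtx P L)
            (false, ⟨(HasLines.mkLine (L := L) hpp, p'), h2⟩) := ⟨by simp, by simp⟩
        have r3 : Rel ((false, ⟨(HasLines.mkLine (L := L) hpp, p'), h2⟩) : Vtx P L)
            (true, ⟨(l', p'), hl'p'⟩) := ⟨by simp, by simp⟩
        exact pow_step _ (pow_step _ (adjM_pow_one_pos r1)
          (adjM_pos_iff.mpr r2)) (adjM_pos_iff.mpr r3)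
    · -- true false : head l, tail l'
      by_cases hll : l = l'
      · exact ⟨1, by simp, adjM_pow_one_pos ⟨by simp, by simp [hll]⟩⟩
      · have h1 := (HasPoints.mkPoint_ax (P := P) hll).1
        have h2 := (HasPoints.mkPoint_ax (P := P) hll).2
        refine ⟨3, by simp, ?_⟩
        have r1 : Rel ((true, ⟨(l, p), hlp⟩) : Vtx P L)
            (false, ⟨(l, HasPoints.mkPoint (P := P) hll), h1⟩) := ⟨by simp, by simp⟩
        have r2 : Rel ((false, ⟨(l, HasPoints.mkPoint (P := P) hll), h1⟩) : Vtx P L)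
            (true, ⟨(l', HasPoints.mkPoint (P := P) hll), h2⟩) := ⟨by simp, by simp⟩
        have r3 : Rel ((true, ⟨(l', HasPoints.mkPoint (P := P) hll), h2⟩) : Vtx P L)
            (false, ⟨(l', p'), hl'p'⟩) := ⟨by simp, by simp⟩
        exact pow_step _ (pow_step _ (adjM_pow_one_pos r1)
          (adjM_pos_iff.mpr r2)) (adjM_pos_iff.mpr r3)
    · -- true true : head l, tail p'
      by_cases hp : p' ∈ l
      · refine ⟨2, by simp, ?_⟩
        have r1 : Rel ((true, ⟨(l, p), hlp⟩) : Vtx P L) (false, ⟨(l, p'), hp⟩) :=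
          ⟨by simp, by simp⟩
        have r2 : Rel ((false, ⟨(l, p'), hp⟩) : Vtx P L) (true, ⟨(l', p'), hl'p'⟩) :=
          ⟨by simp, by simp⟩
        exact pow_step _ (adjM_pow_one_pos r1) (adjM_pos_iff.mpr r2)
      · obtain ⟨⟨m, hm⟩⟩ := nonempty_lines (L := L) p'
        have hlm : l ≠ m := fun h => hp (h ▸ hm)
        have h1 := (HasPoints.mkPoint_ax (P := P) hlm).1
        have h2 := (HasPoints.mkPoint_ax (P := P) hlm).2
        refine ⟨4, by simp, ?_⟩
        have r1 : Rel ((true, ⟨(l, p), hlp⟩) : Vtx P L)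
            (false, ⟨(l, HasPoints.mkPoint (P := P) hlm), h1⟩) := ⟨by simp, by simp⟩
        have r2 : Rel ((false, ⟨(l, HasPoints.mkPoint (P := P) hlm), h1⟩) : Vtx P L)
            (true, ⟨(m, HasPoints.mkPoint (P := P) hlm), h2⟩) := ⟨by simp, by simp⟩
        have r3 : Rel ((true, ⟨(m, HasPoints.mkPoint (P := P) hlm), h2⟩) : Vtx P L)
            (false, ⟨(m, p'), hm⟩) := ⟨by simp, by simp⟩
        have r4 : Rel ((false, ⟨(m, p'), hm⟩) : Vtx P L) (true, ⟨(l', p'), hl'p'⟩) :=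
          ⟨by simp, by simp⟩
        exact pow_step _ (pow_step _ (pow_step _ (adjM_pow_one_pos r1)
          (adjM_pos_iff.mpr r2)) (adjM_pos_iff.mpr r3)) (adjM_pos_iff.mpr r4)
  intro u v
  obtain ⟨i, hi, h⟩ := key u v
  exact sum_pos_of_pow _ hi h

lemma parity {i : ℕ} {u v : Vtx P L} (h : 0 < (adjM P L ^ i) u v) :
    (u.1 = v.1 ↔ Even i) := by
  induction i generalizing v with
  | zero =>
    rw [pow_zero] at h
    by_cases huv : u = v
    · subst huv; simp
    · rw [Matrix.one_apply_ne huv] at h; exact absurd h (by simp)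
  | succ i ih =>
    rw [pow_succ, Matrix.mul_apply] at h
    obtain ⟨w, -, hw⟩ := Finset.exists_ne_zero_of_sum_ne_zero (Nat.pos_iff_ne_zero.mp h)
    obtain ⟨h1, h2⟩ := Nat.mul_ne_zero_iff.mp hw
    have hiw := ih (Nat.pos_of_ne_zero h1)
    have hv : v.1 = !w.1 := (adjM_ne_zero_iff.mp h2).1
    rw [hv, Nat.even_add_one, ← hiw]
    cases u.1 <;> cases w.1 <;> simp

lemma exists_far : ∃ u v : Vtx P L, (∑ i ∈ Finset.range 4, adjM P L ^ i) u v = 0 := by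
  have hL : Nonempty L := by
    have := card_lines (P := P) (L := L)
    have : 0 < Fintype.card L := by omega
    exact Fintype.card_pos_iff.mp this
  obtain ⟨l'⟩ := hL
  obtain ⟨p₀, hp₀⟩ := Nondegenerate.exists_point (P := P) l'
  obtain ⟨⟨l₀, hl₀⟩⟩ := nonempty_lines (L := L) p₀
  obtain ⟨⟨p', hp'⟩⟩ := nonempty_points (P := P) l'
  refine ⟨(false, ⟨(l₀, p₀), hl₀⟩), (false, ⟨(l', p'), hp'⟩), ?_⟩
  have huv : ((false, ⟨(l₀, p₀), hl₀⟩) : Vtx P L) ≠ (false, ⟨(l', p'), hp'⟩) := by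
    intro h
    simp only [Prod.mk.injEq, Subtype.mk.injEq, Prod.mk.injEq] at h
    exact hp₀ (h.2.2 ▸ hp')
  rw [Matrix.sum_apply]
  refine Finset.sum_eq_zero ?_
  intro i hi
  have hi4 : i < 4 := Finset.mem_range.mp hi
  interval_cases i
  · rw [pow_zero]; exact Matrix.one_apply_ne huv
  · rw [pow_one, adjM_eq_zero_iff, Rel]
    rintro ⟨h, -⟩
    simp at h
  · rw [pow_two, Matrix.mul_apply]
    refine Finset.sum_eq_zero ?_
    rintro ⟨ε'', ⟨⟨m, x⟩, hmx⟩⟩ -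
    rw [Nat.mul_eq_zero]
    by_contra hc
    push_neg at hc
    obtain ⟨h1, h2⟩ := hc
    rw [adjM_ne_zero_iff] at h1 h2
    obtain ⟨hb1, hc1⟩ := h1
    obtain ⟨hb2, hc2⟩ := h2
    simp only [Bool.not_false] at hb1
    subst hb1
    simp only [Bool.false_eq_true, if_false, if_true] at hc1 hc2
    exact hp₀ (by rw [hc2]; exact hc1 ▸ hmx)
  · by_contra hc
    have := parity (u := ((false, ⟨(l₀, p₀), hl₀⟩) : Vtx P L))
      (v := ((false, ⟨(l', p'), hp'⟩) : Vtx P L)) (i := 3) (Nat.pos_of_ne_zero hc)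
    simp at this
    exact absurd this (by decide)

lemma card_vtx : Fintype.card (Vtx P L)
    = 2 * ((order P L ^ 2 + order P L + 1) * (order P L + 1)) := by
  rw [Fintype.card_prod, Fintype.card_bool]
  congr 1
  rw [Fintype.card_congr (Equiv.subtypeProdEquivSigmaSubtype (fun (l : L) (p : P) => p ∈ l)),
    Fintype.card_sigma]
  have hpt : ∀ l : L, Fintype.card {p : P // p ∈ l} = order P L + 1 := by
    intro l
    rw [← Nat.card_eq_fintype_card]
    exact pointCount_eq P l
  rw [Finset.sum_congr rfl (fun l _ => hpt l), Finset.sum_const, Finset.card_univ,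
    card_lines (P := P) (L := L), smul_eq_mul]

lemma card_filter_equiv {V W : Type*} [Fintype V] [Fintype W] (e : V ≃ W) (Q : V → Prop)
    [DecidablePred Q] :
    (Finset.univ.filter fun w => Q (e.symm w)).card = (Finset.univ.filter Q).card := by
  refine Finset.card_bij' (fun w _ => e.symm w) (fun v _ => e v) ?_ ?_ ?_ ?_ <;> simp

lemma submatrix_pow {V W : Type*} [Fintype V] [Fintype W] [DecidableEq V] [DecidableEq W]
    (A : Matrix V V ℕ) (e : V ≃ W) (k : ℕ) :
    (A.submatrix e.symm e.symm) ^ k = (A ^ k).submatrix e.symm e.symm := by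
  induction k with
  | zero => rw [pow_zero, pow_zero, Matrix.submatrix_one_equiv]
  | succ k ih =>
    rw [pow_succ, pow_succ, ih]
    exact Matrix.submatrix_mul_equiv (A ^ k) A _ e.symm _

theorem main_abstract (q : ℕ) (horder : order P L = q) :
    ∃ Adj : Matrix (Fin (2 * (q + 1) * (q ^ 2 + q + 1))) (Fin (2 * (q + 1) * (q ^ 2 + q + 1))) ℕ,
      IsMixedGraph Adj ∧ IsTotallyRegular Adj 1 q ∧ IsBipartiteMixed Adj ∧
      DiamExactly Adj 4 := by
  classical
  have hcard : Fintype.card (Vtx P L) = 2 * (q + 1) * (q ^ 2 + q + 1) := by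
    rw [card_vtx (P := P) (L := L), horder]; ring
  let e : Vtx P L ≃ Fin (2 * (q + 1) * (q ^ 2 + q + 1)) := Fintype.equivFinOfCardEq hcard
  refine ⟨(adjM P L).submatrix e.symm e.symm, ?_, ?_, ?_, ?_, ?_⟩
  · exact ⟨fun u v => (isMixedGraph (P := P) (L := L)).1 _ _,
      fun u => (isMixedGraph (P := P) (L := L)).2 _⟩
  · intro u
    obtain ⟨h1, h2, h3⟩ := isTotallyRegular (P := P) (L := L) (e.symm u)
    rw [horder] at h2 h3
    exact ⟨(card_filter_equiv e _).trans h1, (card_filter_equiv e _).trans h2,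
      (card_filter_equiv e _).trans h3⟩
  · obtain ⟨c, hc⟩ := isBipartiteMixed (P := P) (L := L)
    exact ⟨c ∘ e.symm, fun u v h => hc _ _ h⟩
  · intro u v
    have := diamAtMost (P := P) (L := L) (e.symm u) (e.symm v)
    rw [Matrix.sum_apply] at this ⊢
    simpa only [submatrix_pow, Matrix.submatrix_apply] using this
  · obtain ⟨u₀, v₀, h⟩ := exists_far (P := P) (L := L)
    refine ⟨e u₀, e v₀, ?_⟩
    rw [Matrix.sum_apply] at h ⊢
    simpa only [submatrix_pow, Matrix.submatrix_apply, Equiv.symm_apply_apply] using h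

end MixedAux

section FieldPart
open scoped LinearAlgebra.Projectivization
open Projectivization
variable (K : Type*) [Field K] [Fintype K] [DecidableEq K]

lemma order_ofField : order (ℙ K (Fin 3 → K)) (ℙ K (Fin 3 → K)) = Fintype.card K := by
  have h0 : (![0, 0, 1] : Fin 3 → K) ≠ 0 := by
    intro h; have := congr_fun h 2; simp at this
  set l₀ : ℙ K (Fin 3 → K) := mk K ![0, 0, 1] h0 with hl₀
  have hmem : ∀ (v : Fin 3 → K) (hv : v ≠ 0), mk K v hv ∈ l₀ ↔ v 2 = 0 := by
    intro v hv
    rw [hl₀, ofField.mem_iff, orthogonal_mk]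
    simp [dotProduct, Fin.sum_univ_three]
  have hb : ∀ b : K, (![1, b, 0] : Fin 3 → K) ≠ 0 := by
    intro b h; have := congr_fun h 0; simp at this
  have h010 : (![0, 1, 0] : Fin 3 → K) ≠ 0 := by
    intro h; have := congr_fun h 1; simp at this
  let f : Option K → {x : ℙ K (Fin 3 → K) // x ∈ l₀} := fun o =>
    match o with
    | some b => ⟨mk K ![1, b, 0] (hb b), (hmem _ _).mpr (by simp)⟩
    | none => ⟨mk K ![0, 1, 0] h010, (hmem _ _).mpr (by simp)⟩
  have hinj : Function.Injective f := by
    rintro (_ | x) (_ | y) hab <;>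
      simp only [f, Subtype.mk.injEq, mk_eq_mk_iff'] at hab
    · rfl
    · obtain ⟨a, ha⟩ := hab
      have h0' := congr_fun ha 0
      have h1' := congr_fun ha 1
      simp at h0' h1'
      subst h0'
      simp at h1'
    · obtain ⟨a, ha⟩ := hab
      have := congr_fun ha 0
      simp at this
    · obtain ⟨a, ha⟩ := hab
      have h0' := congr_fun ha 0
      have h1' := congr_fun ha 1
      simp at h0' h1'
      subst h0'
      simp_all
  have hsurj : Function.Surjective f := by
    rintro ⟨x, hx⟩
    revert hx
    induction' x with v hv
    intro hx
    have hv2 : v 2 = 0 := (hmem v hv).mp hx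
    by_cases h0' : v 0 = 0
    · have hv1 : v 1 ≠ 0 := by
        intro h1
        apply hv
        funext i; fin_cases i <;> assumption
      refine ⟨none, ?_⟩
      simp only [f, Subtype.mk.injEq, mk_eq_mk_iff']
      refine ⟨(v 1)⁻¹, ?_⟩
      funext i; fin_cases i <;>
        simp [h0', hv2, inv_mul_cancel₀ hv1]
    · refine ⟨some ((v 0)⁻¹ * v 1), ?_⟩
      simp only [f, Subtype.mk.injEq, mk_eq_mk_iff']
      refine ⟨(v 0)⁻¹, ?_⟩
      funext i; fin_cases i <;>
        simp [hv2, inv_mul_cancel₀ h0']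
  have hcard : pointCount (ℙ K (Fin 3 → K)) l₀ = Fintype.card K + 1 := by
    rw [pointCount, ← Nat.card_eq_of_bijective f ⟨hinj, hsurj⟩, Nat.card_eq_fintype_card,
      Fintype.card_option]
  haveI : Finite (ℙ K (Fin 3 → K)) := Quotient.finite _
  have := pointCount_eq (ℙ K (Fin 3 → K)) l₀
  omega

end FieldPart

open scoped LinearAlgebra.Projectivization in
theorem stmt_18 (q : ℕ) (hq : ∃ p n : ℕ, p.Prime ∧ 0 < n ∧ q = p ^ n) :
    (∃ Adj : Matrix (Fin (2 * (q + 1) * (q^2 + q + 1))) (Fin (2 * (q + 1) * (q^2 + q + 1))) ℕ,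
      IsMixedGraph Adj ∧ IsTotallyRegular Adj 1 q ∧ IsBipartiteMixed Adj ∧
      DiamExactly Adj 4) ∧
    2 * (q + 1) * (q^2 + q + 1) = 2 * (q + 1) * (((q + 1) - 1)^3 - 1) / ((q + 1) - 2) := by
  obtain ⟨p, n, hp, hn, hqpn⟩ := hq
  haveI : Fact p.Prime := ⟨hp⟩
  have hq2 : 2 ≤ q := by
    rw [hqpn]
    calc 2 ≤ p := hp.two_le
    _ ≤ p ^ n := Nat.le_self_pow hn.ne' p
  constructor
  · set K := GaloisField p n with hK
    haveI : Fintype K := Fintype.ofFinite K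
    haveI : DecidableEq K := Classical.decEq K
    haveI : Finite (ℙ K (Fin 3 → K)) := Quotient.finite _
    haveI : Fintype (ℙ K (Fin 3 → K)) := Fintype.ofFinite _
    have hcardK : Fintype.card K = q := by
      have := GaloisField.card p n hn.ne'
      rw [Nat.card_eq_fintype_card] at this
      rw [this, hqpn]
    exact MixedAux.main_abstract (P := ℙ K (Fin 3 → K)) (L := ℙ K (Fin 3 → K)) q
      ((order_ofField K).trans hcardK)
  · obtain ⟨m, hm⟩ : ∃ m, q = m + 2 := ⟨q - 2, by omega⟩
    subst hm
    rw [show m + 2 + 1 - 1 = m + 2 by omega, show m + 2 + 1 - 2 = m + 1 by omega]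
    have h3 : (m + 2) ^ 3 - 1 = (m + 1) * ((m + 2) ^ 2 + (m + 2) + 1) := by
      have : (m + 2) ^ 3 = (m + 1) * ((m + 2) ^ 2 + (m + 2) + 1) + 1 := by ring
      omega
    rw [h3, show 2 * (m + 2 + 1) * ((m + 1) * ((m + 2) ^ 2 + (m + 2) + 1))
        = 2 * (m + 2 + 1) * ((m + 2) ^ 2 + (m + 2) + 1) * (m + 1) by ring,
      Nat.mul_div_cancel _ (by omega : 0 < m + 1)]
end

section
/- There exists a bipartite mixed graph on 12 vertices that is totally regular with degrees (1, 1) and has diameter exactly 4; since M_B(1,1,4) = 2(d³ − d² + (z − r + 1)d + r) = 14 for r = z = 1, d = 2, this is a mixed bipartite almost Moore graph, i.e., it has M_B(1,1,4) − 2 vertices. -/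
def myAdj : Matrix (Fin 12) (Fin 12) ℕ :=
  !![0, 0, 0, 0, 0, 0, 1, 1, 0, 0, 0, 0;
  0, 0, 0, 0, 0, 0, 1, 1, 0, 0, 0, 0;
  0, 0, 0, 0, 0, 0, 0, 0, 1, 1, 0, 0;
  0, 0, 0, 0, 0, 0, 0, 0, 1, 1, 0, 0;
  0, 0, 0, 0, 0, 0, 0, 0, 0, 0, 1, 1;
  0, 0, 0, 0, 0, 0, 0, 0, 0, 0, 1, 1;
  1, 0, 1, 0, 0, 0, 0, 0, 0, 0, 0, 0;
  0, 1, 0, 0, 1, 0, 0, 0, 0, 0, 0, 0;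
  1, 0, 1, 0, 0, 0, 0, 0, 0, 0, 0, 0;
  0, 0, 0, 1, 0, 1, 0, 0, 0, 0, 0, 0;
  0, 1, 0, 0, 1, 0, 0, 0, 0, 0, 0, 0;
  0, 0, 0, 1, 0, 1, 0, 0, 0, 0, 0, 0]

instance (A : Matrix (Fin 12) (Fin 12) ℕ) (u v : Fin 12) (n : ℕ) : Decidable (A u v ≤ n) := Nat.decLe _ _

instance (A : Matrix (Fin 12) (Fin 12) ℕ) (u v : Fin 12) (n : ℕ) : Decidable (A u v = n) := Nat.decEq _ _

instance (A : Matrix (Fin 12) (Fin 12) ℕ) (u v : Fin 12) (n : ℕ) : Decidable (n < A u v) := Nat.decLt _ _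

theorem stmt_19 :
    (∃ Adj : Matrix (Fin 12) (Fin 12) ℕ,
      IsMixedGraph Adj ∧ IsTotallyRegular Adj 1 1 ∧ IsBipartiteMixed Adj ∧
      DiamExactly Adj 4) ∧
    (12 : ℕ) = 2 * (2^3 - 2^2 + (1 - 1 + 1) * 2 + 1) - 2 := by
  refine ⟨⟨myAdj, ?_, ?_, ⟨fun v => decide (v.val < 6), ?_⟩, ?_, ?_⟩, by norm_num⟩
  · exact ⟨by decide, by decide⟩
  · unfold IsTotallyRegular; decide
  · decide
  · unfold DiamAtMost; decide
  · exact ⟨0, 3, by decide⟩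
end
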